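/- arXiv:2503.10394 — 3 statements merged into one kernel-verified Lean document; each statement's English description precedes it below -/
import Mathlib

section
/- The central element X₁₁^{l₁·l} (equivalently, the operator given by X₁₁^{l₁}) acts invertibly on V₁(μ) for every μ ∈ (K*)⁴; X₁₁^{l₁} acts as zero on V₂(μ) while X₂₂^{l₁} acts invertibly on V₂(μ) for every μ ∈ (K*)³; and both X₁₁^{l₁} and X₂₂^{l₁} act as zero on V₃(μ) for every μ ∈ (K*)². Consequently, for all choices of parameters, no module V₁(μ) is isomorphic to any V₂(λ) or V₃(λ), and no V₂(μ) is isomorphic to any V₃(λ); i.e., the three types of simple M₂(α,β)-modules are pairwise non-isomorphic. -/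
noncomputable section

open MulOpposite

variable {K : Type*} [Field K]

/-- Defining relations of the two-parameter quantum matrix algebra `M₂(α,β)`.
Generators: `0 ↦ X₁₁`, `1 ↦ X₁₂`, `2 ↦ X₂₁`, `3 ↦ X₂₂`. -/
inductive QMRel (α β : K) : FreeAlgebra K (Fin 4) → FreeAlgebra K (Fin 4) → Prop
  | r12_11 : QMRel α β (FreeAlgebra.ι K 1 * FreeAlgebra.ι K 0)
      (α • (FreeAlgebra.ι K 0 * FreeAlgebra.ι K 1))
  | r21_11 : QMRel α β (FreeAlgebra.ι K 2 * FreeAlgebra.ι K 0)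
      (β • (FreeAlgebra.ι K 0 * FreeAlgebra.ι K 2))
  | r22_21 : QMRel α β (FreeAlgebra.ι K 3 * FreeAlgebra.ι K 2)
      (α • (FreeAlgebra.ι K 2 * FreeAlgebra.ι K 3))
  | r22_12 : QMRel α β (FreeAlgebra.ι K 3 * FreeAlgebra.ι K 1)
      (β • (FreeAlgebra.ι K 1 * FreeAlgebra.ι K 3))
  | r21_12 : QMRel α β (FreeAlgebra.ι K 2 * FreeAlgebra.ι K 1)
      ((β * α⁻¹) • (FreeAlgebra.ι K 1 * FreeAlgebra.ι K 2))
  | r22_11 : QMRel α β (FreeAlgebra.ι K 3 * FreeAlgebra.ι K 0)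
      (FreeAlgebra.ι K 0 * FreeAlgebra.ι K 3 + (β - α⁻¹) • (FreeAlgebra.ι K 1 * FreeAlgebra.ι K 2))

/-- The two-parameter quantum matrix algebra `M₂(α,β)`. -/
abbrev QM (α β : K) : Type _ := RingQuot (QMRel α β)

def X11 (α β : K) : QM α β := RingQuot.mkAlgHom K (QMRel α β) (FreeAlgebra.ι K 0)
def X12 (α β : K) : QM α β := RingQuot.mkAlgHom K (QMRel α β) (FreeAlgebra.ι K 1)
def X21 (α β : K) : QM α β := RingQuot.mkAlgHom K (QMRel α β) (FreeAlgebra.ι K 2)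
def X22 (α β : K) : QM α β := RingQuot.mkAlgHom K (QMRel α β) (FreeAlgebra.ι K 3)

/-- The quantum determinant `D = X₁₁X₂₂ − α⁻¹X₁₂X₂₁`. -/
def Dq (α β : K) : QM α β := X11 α β * X22 α β - α⁻¹ • (X12 α β * X21 α β)

/-- `l₂ := ord(αβ⁻¹)`. -/
def l2 (α β : K) : ℕ := orderOf (α * β⁻¹)

open Classical in
/-- `l₁ := ord(αβ)` if `ord(β) ∣ ord(αβ)·ord(αβ⁻¹)`, and `l₁ := 2·ord(αβ)` otherwise. -/
def l1 (α β : K) : ℕ :=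
  if orderOf β ∣ orderOf (α * β) * orderOf (α * β⁻¹) then orderOf (α * β)
  else 2 * orderOf (α * β)

/-- The underlying vector space of the modules `V₁(μ)` and `V₂(μ)`. -/
abbrev V12 (α β : K) : Type _ := (ZMod (l1 α β) × ZMod (l2 α β)) → K

/-- The underlying vector space of the module `V₃(μ)`. -/
abbrev V3 (α β : K) : Type _ := (ZMod (orderOf (α * β)) × ZMod (l2 α β)) → K

/-- The basis vectors `e(a,b)` of `V₁(μ)` and `V₂(μ)`. -/
def e12 (α β : K) (a : ZMod (l1 α β)) (b : ZMod (l2 α β)) : V12 α β := Pi.single (a, b) 1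

/-- The basis vectors `e(a,b)` of `V₃(μ)`. -/
def e3 (α β : K) (a : ZMod (orderOf (α * β))) (b : ZMod (l2 α β)) : V3 α β := Pi.single (a, b) 1

/-- `ρ` is the representation of `M₂(α,β)` on `V₁(μ₁,μ₂,μ₃,μ₄)` (a right module,
presented as a `K`-algebra map from the opposite algebra to endomorphisms),
given on the basis `e(a,b)`, `0 ≤ a ≤ l₁−1`, `0 ≤ b ≤ l₂−1`, by the formulas:
`e(a,b)X₁₁ = μ₁β^b e(a⊕1,b)`;
`e(a,b)X₁₂ = μ₂⁻¹μ₃(α⁻¹β)^b(αβ)^{−a} e(a,b−1)` if `b ≠ 0`,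
  `e(a,0)X₁₂ = μ₂⁻¹μ₃β^{al₂}(αβ)^{−a} e(a,l₂−1)`;
`e(a,b)X₂₁ = μ₂ e(a,b+1)` if `b ≠ l₂−1`, `e(a,l₂−1)X₂₁ = μ₂β^{−al₂} e(a,0)`;
`e(a,b)X₂₂ = μ₁⁻¹α^{−b}(μ₄ + β(αβ)^{−a}μ₃) e(a⊖1,b)`,
with index arithmetic modulo `l₁` (first slot) and `l₂` (second slot). -/
def IsV1Rep (α β μ₁ μ₂ μ₃ μ₄ : K)
    (ρ : (QM α β)ᵐᵒᵖ →ₐ[K] Module.End K (V12 α β)) : Prop :=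
  (∀ a b, ρ (op (X11 α β)) (e12 α β a b) = (μ₁ * β ^ b.val) • e12 α β (a + 1) b) ∧
  (∀ a b, ρ (op (X12 α β)) (e12 α β a b) =
    (if b = 0 then μ₂⁻¹ * μ₃ * β ^ (a.val * l2 α β) * ((α * β) ^ a.val)⁻¹
      else μ₂⁻¹ * μ₃ * (α⁻¹ * β) ^ b.val * ((α * β) ^ a.val)⁻¹) • e12 α β a (b - 1)) ∧
  (∀ a b, ρ (op (X21 α β)) (e12 α β a b) =
    (if b.val = l2 α β - 1 then μ₂ * (β ^ (a.val * l2 α β))⁻¹ else μ₂) • e12 α β a (b + 1)) ∧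
  (∀ a b, ρ (op (X22 α β)) (e12 α β a b) =
    (μ₁⁻¹ * (α ^ b.val)⁻¹ * (μ₄ + β * ((α * β) ^ a.val)⁻¹ * μ₃)) • e12 α β (a - 1) b)

/-- `ρ` is the representation of `M₂(α,β)` on `V₂(μ₁,μ₂,μ₃)` given on the basis
`e(a,b)` by:
`e(a,b)X₁₁ = μ₁⁻¹μ₃α⁻¹(α⁻¹β)^b((αβ)^a − 1) e(a−1,b)` if `a ≠ 0`, `e(0,b)X₁₁ = 0`;
`e(a,b)X₁₂ = μ₂⁻¹μ₃β^a(α⁻¹β)^b e(a,b∔(−1))`;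
`e(a,b)X₂₁ = μ₂α^a e(a,b∔1)`;
`e(a,b)X₂₂ = μ₁ e(a+1,b)` if `a ≠ l₁−1`, `e(l₁−1,b)X₂₂ = μ₁α^{−bl₁} e(0,b)`. -/
def IsV2Rep (α β μ₁ μ₂ μ₃ : K)
    (ρ : (QM α β)ᵐᵒᵖ →ₐ[K] Module.End K (V12 α β)) : Prop :=
  (∀ a b, ρ (op (X11 α β)) (e12 α β a b) =
    (if a = 0 then 0
      else μ₁⁻¹ * μ₃ * α⁻¹ * (α⁻¹ * β) ^ b.val * ((α * β) ^ a.val - 1)) • e12 α β (a - 1) b) ∧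
  (∀ a b, ρ (op (X12 α β)) (e12 α β a b) =
    (μ₂⁻¹ * μ₃ * β ^ a.val * (α⁻¹ * β) ^ b.val) • e12 α β a (b - 1)) ∧
  (∀ a b, ρ (op (X21 α β)) (e12 α β a b) = (μ₂ * α ^ a.val) • e12 α β a (b + 1)) ∧
  (∀ a b, ρ (op (X22 α β)) (e12 α β a b) =
    (if a.val = l1 α β - 1 then μ₁ * (α ^ (b.val * l1 α β))⁻¹ else μ₁) • e12 α β (a + 1) b)

/-- `ρ` is the representation of `M₂(α,β)` on `V₃(μ₁,μ₂)` given on the basis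
`e(a,b)`, `0 ≤ a ≤ ord(αβ)−1`, `0 ≤ b ≤ l₂−1`, by:
`e(a,b)X₁₁ = μ₂α⁻¹(α⁻¹β)^b((αβ)^a − 1) e(a−1,b)` if `a ≠ 0`, `e(0,b)X₁₁ = 0`;
`e(a,b)X₁₂ = μ₁⁻¹μ₂β^a(α⁻¹β)^b e(a,b∔(−1))`;
`e(a,b)X₂₁ = μ₁α^a e(a,b∔1)`;
`e(a,b)X₂₂ = e(a+1,b)` if `a ≠ ord(αβ)−1`, `e(ord(αβ)−1,b)X₂₂ = 0`. -/
def IsV3Rep (α β μ₁ μ₂ : K)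
    (ρ : (QM α β)ᵐᵒᵖ →ₐ[K] Module.End K (V3 α β)) : Prop :=
  (∀ a b, ρ (op (X11 α β)) (e3 α β a b) =
    (if a = 0 then 0
      else μ₂ * α⁻¹ * (α⁻¹ * β) ^ b.val * ((α * β) ^ a.val - 1)) • e3 α β (a - 1) b) ∧
  (∀ a b, ρ (op (X12 α β)) (e3 α β a b) =
    (μ₁⁻¹ * μ₂ * β ^ a.val * (α⁻¹ * β) ^ b.val) • e3 α β a (b - 1)) ∧
  (∀ a b, ρ (op (X21 α β)) (e3 α β a b) = (μ₁ * α ^ a.val) • e3 α β a (b + 1)) ∧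
  (∀ a b, ρ (op (X22 α β)) (e3 α β a b) =
    if a.val = orderOf (α * β) - 1 then 0 else e3 α β (a + 1) b)

section Helpers

private lemma endo_bij {ι : Type*} [Fintype ι] [DecidableEq ι]
    (T : Module.End K (ι → K)) (σ : Equiv.Perm ι) (c : ι → K) (hc : ∀ i, c i ≠ 0)
    (hT : ∀ i, T (Pi.single i 1) = c i • (Pi.single (σ i) 1 : ι → K)) :
    Function.Bijective T := by
  let S : Module.End K (ι → K) :=
    (Pi.basisFun K ι).constr K fun i => (c (σ.symm i))⁻¹ • (Pi.single (σ.symm i) 1 : ι → K)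
  have hS : ∀ i, S (Pi.single i 1) = (c (σ.symm i))⁻¹ • (Pi.single (σ.symm i) 1 : ι → K) := by
    intro i
    have h := (Pi.basisFun K ι).constr_basis K
      (fun i => (c (σ.symm i))⁻¹ • (Pi.single (σ.symm i) 1 : ι → K)) i
    rwa [Pi.basisFun_apply] at h
  have h1 : S.comp T = LinearMap.id := by
    apply (Pi.basisFun K ι).ext; intro i
    simp [Pi.basisFun_apply, hT, hS, map_smul, smul_smul, inv_mul_cancel₀ (hc _), mul_inv_cancel₀ (hc _)]
  have h2 : T.comp S = LinearMap.id := by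
    apply (Pi.basisFun K ι).ext; intro i
    simp [Pi.basisFun_apply, hS, hT, map_smul, smul_smul, inv_mul_cancel₀ (hc _), mul_inv_cancel₀ (hc _)]
  refine Function.bijective_iff_has_inverse.mpr ⟨S, fun v => ?_, fun v => ?_⟩
  · exact congrFun (congrArg DFunLike.coe h1) v
  · exact congrFun (congrArg DFunLike.coe h2) v

private lemma endo_zero {ι : Type*} [Fintype ι] [DecidableEq ι]
    (T : Module.End K (ι → K)) (hT : ∀ i, T (Pi.single i 1) = 0) : T = 0 := by
  apply (Pi.basisFun K ι).ext; intro i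
  simp [Pi.basisFun_apply, hT]

private lemma pow_bij {M : Type*} [AddCommMonoid M] [Module K M] (T : Module.End K M)
    (hT : Function.Bijective T) (n : ℕ) : Function.Bijective (T ^ n) := by
  induction n with
  | zero => rw [pow_zero]; exact Function.bijective_id
  | succ n ih =>
    rw [pow_succ, Module.End.coe_mul]
    exact ih.comp hT

private lemma zmod_val_sub_one {n : ℕ} [NeZero n] (a : ZMod n) (ha : a ≠ 0) :
    (a - 1).val = a.val - 1 := by
  have h1 : 1 ≤ a.val := Nat.one_le_iff_ne_zero.mpr (by simpa [ZMod.val_eq_zero] using ha)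
  have h2 : a.val - 1 < n := lt_of_le_of_lt (Nat.sub_le _ _) (ZMod.val_lt a)
  have : a - 1 = ((a.val - 1 : ℕ) : ZMod n) := by
    rw [Nat.cast_sub h1, ZMod.natCast_rightInverse a, Nat.cast_one]
  rw [this, ZMod.val_cast_of_lt h2]

private lemma zmod_val_add_one {n : ℕ} [NeZero n] (a : ZMod n) (ha : a.val ≠ n - 1) :
    (a + 1).val = a.val + 1 := by
  have h2 : a.val + 1 < n := by
    have := ZMod.val_lt a
    omega
  have : a + 1 = ((a.val + 1 : ℕ) : ZMod n) := by
    rw [Nat.cast_add, ZMod.natCast_rightInverse a, Nat.cast_one]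
  rw [this, ZMod.val_cast_of_lt h2]

private lemma pow_zero_of_dec {n : ℕ} [NeZero n] {ι : Type*} [DecidableEq ι]
    (T : Module.End K ((ZMod n × ι) → K)) (c : ZMod n → ι → K)
    (hT : ∀ a b, T (Pi.single (a, b) 1) =
      (if a = 0 then 0 else c a b) • (Pi.single (a - 1, b) 1 : (ZMod n × ι) → K)) :
    ∀ (k : ℕ) (a : ZMod n) (b : ι), a.val ≤ k → (T ^ (k + 1)) (Pi.single (a, b) 1) = 0 := by
  intro k
  induction k with
  | zero =>
    intro a b ha
    have ha0 : a = 0 := by rwa [Nat.le_zero, ZMod.val_eq_zero] at ha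
    rw [pow_one, hT, ha0, if_pos rfl, zero_smul]
  | succ k ih =>
    intro a b ha
    rw [pow_succ, Module.End.mul_apply, hT]
    by_cases h0 : a = 0
    · rw [if_pos h0, zero_smul, map_zero]
    · rw [if_neg h0, map_smul, ih (a - 1) b (by rw [zmod_val_sub_one a h0]; omega), smul_zero]

private lemma pow_zero_of_dec' {n : ℕ} [NeZero n] {ι : Type*} [DecidableEq ι]
    (T : Module.End K ((ZMod n × ι) → K)) (c : ZMod n → ι → K)
    (hT : ∀ a b, T (Pi.single (a, b) 1) =
      (if a = 0 then 0 else c a b) • (Pi.single (a - 1, b) 1 : (ZMod n × ι) → K))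
    (m : ℕ) (hm : n ≤ m) (a : ZMod n) (b : ι) : (T ^ m) (Pi.single (a, b) 1) = 0 := by
  have hav : a.val < n := ZMod.val_lt a
  obtain ⟨j, rfl⟩ : ∃ j, m = j + (a.val + 1) := ⟨m - (a.val + 1), by omega⟩
  rw [pow_add, Module.End.mul_apply, pow_zero_of_dec T c hT a.val a b le_rfl, map_zero]

private lemma pow_zero_of_inc {n : ℕ} [NeZero n] {ι : Type*} [DecidableEq ι]
    (T : Module.End K ((ZMod n × ι) → K)) (c : ZMod n → ι → K)
    (hT : ∀ a b, T (Pi.single (a, b) 1) =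
      (if a.val = n - 1 then 0 else c a b) • (Pi.single (a + 1, b) 1 : (ZMod n × ι) → K)) :
    ∀ (k : ℕ) (a : ZMod n) (b : ι), n - 1 ≤ a.val + k →
      (T ^ (k + 1)) (Pi.single (a, b) 1) = 0 := by
  intro k
  induction k with
  | zero =>
    intro a b ha
    have hav : a.val < n := ZMod.val_lt a
    have ha0 : a.val = n - 1 := by omega
    rw [pow_one, hT, if_pos ha0, zero_smul]
  | succ k ih =>
    intro a b ha
    rw [pow_succ, Module.End.mul_apply, hT]
    by_cases h0 : a.val = n - 1
    · rw [if_pos h0, zero_smul, map_zero]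
    · rw [if_neg h0, map_smul, ih (a + 1) b (by rw [zmod_val_add_one a h0]; omega), smul_zero]

private lemma pow_zero_of_inc' {n : ℕ} [NeZero n] {ι : Type*} [DecidableEq ι]
    (T : Module.End K ((ZMod n × ι) → K)) (c : ZMod n → ι → K)
    (hT : ∀ a b, T (Pi.single (a, b) 1) =
      (if a.val = n - 1 then 0 else c a b) • (Pi.single (a + 1, b) 1 : (ZMod n × ι) → K))
    (m : ℕ) (hm : n ≤ m) (a : ZMod n) (b : ι) : (T ^ m) (Pi.single (a, b) 1) = 0 := by
  have hav : a.val < n := ZMod.val_lt a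
  obtain ⟨j, rfl⟩ : ∃ j, m = j + ((n - 1 - a.val) + 1) := ⟨m - ((n - 1 - a.val) + 1), by omega⟩
  rw [pow_add, Module.End.mul_apply,
    pow_zero_of_inc T c hT (n - 1 - a.val) a b (by omega), map_zero]

end Helpers

set_option maxHeartbeats 2000000 in
/-- Remark 5.4 of the paper. `X₁₁^{l₁}` acts invertibly on every
`V₁(μ)`; `X₁₁^{l₁}` acts as zero and `X₂₂^{l₁}` acts invertibly on every `V₂(μ)`;
both `X₁₁^{l₁}` and `X₂₂^{l₁}` act as zero on every `V₃(μ)`. Consequently the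
three types of simple `M₂(α,β)`-modules are pairwise non-isomorphic. -/

theorem stmt14 [IsAlgClosed K] (α β : K)
    (hα : α ≠ 0) (hβ : β ≠ 0) (hoα : 0 < orderOf α) (hoβ : 0 < orderOf β)
    (hab : α * β ≠ 1) :
    (∀ μ₁ μ₂ μ₃ μ₄ : K, μ₁ ≠ 0 → μ₂ ≠ 0 → μ₃ ≠ 0 → μ₄ ≠ 0 →
      ∀ ρ : (QM α β)ᵐᵒᵖ →ₐ[K] Module.End K (V12 α β), IsV1Rep α β μ₁ μ₂ μ₃ μ₄ ρ →
        Function.Bijective (ρ (op (X11 α β ^ l1 α β)))) ∧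
    (∀ μ₁ μ₂ μ₃ : K, μ₁ ≠ 0 → μ₂ ≠ 0 → μ₃ ≠ 0 →
      ∀ ρ : (QM α β)ᵐᵒᵖ →ₐ[K] Module.End K (V12 α β), IsV2Rep α β μ₁ μ₂ μ₃ ρ →
        ρ (op (X11 α β ^ l1 α β)) = 0 ∧
        Function.Bijective (ρ (op (X22 α β ^ l1 α β)))) ∧
    (∀ μ₁ μ₂ : K, μ₁ ≠ 0 → μ₂ ≠ 0 →
      ∀ ρ : (QM α β)ᵐᵒᵖ →ₐ[K] Module.End K (V3 α β), IsV3Rep α β μ₁ μ₂ ρ →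
        ρ (op (X11 α β ^ l1 α β)) = 0 ∧ ρ (op (X22 α β ^ l1 α β)) = 0) ∧
    (∀ μ₁ μ₂ μ₃ μ₄ ν₁ ν₂ ν₃ : K, μ₁ ≠ 0 → μ₂ ≠ 0 → μ₃ ≠ 0 → μ₄ ≠ 0 →
        ν₁ ≠ 0 → ν₂ ≠ 0 → ν₃ ≠ 0 →
      ∀ ρ₁ ρ₂ : (QM α β)ᵐᵒᵖ →ₐ[K] Module.End K (V12 α β),
        IsV1Rep α β μ₁ μ₂ μ₃ μ₄ ρ₁ → IsV2Rep α β ν₁ ν₂ ν₃ ρ₂ →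
        ¬ ∃ f : V12 α β ≃+ V12 α β,
            ∀ (x : QM α β) (v : V12 α β), f (ρ₁ (op x) v) = ρ₂ (op x) (f v)) ∧
    (∀ μ₁ μ₂ μ₃ μ₄ ν₁ ν₂ : K, μ₁ ≠ 0 → μ₂ ≠ 0 → μ₃ ≠ 0 → μ₄ ≠ 0 →
        ν₁ ≠ 0 → ν₂ ≠ 0 →
      ∀ (ρ₁ : (QM α β)ᵐᵒᵖ →ₐ[K] Module.End K (V12 α β))
        (ρ₃ : (QM α β)ᵐᵒᵖ →ₐ[K] Module.End K (V3 α β)),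
        IsV1Rep α β μ₁ μ₂ μ₃ μ₄ ρ₁ → IsV3Rep α β ν₁ ν₂ ρ₃ →
        ¬ ∃ f : V12 α β ≃+ V3 α β,
            ∀ (x : QM α β) (v : V12 α β), f (ρ₁ (op x) v) = ρ₃ (op x) (f v)) ∧
    (∀ μ₁ μ₂ μ₃ ν₁ ν₂ : K, μ₁ ≠ 0 → μ₂ ≠ 0 → μ₃ ≠ 0 → ν₁ ≠ 0 → ν₂ ≠ 0 →
      ∀ (ρ₂ : (QM α β)ᵐᵒᵖ →ₐ[K] Module.End K (V12 α β))
        (ρ₃ : (QM α β)ᵐᵒᵖ →ₐ[K] Module.End K (V3 α β)),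
        IsV2Rep α β μ₁ μ₂ μ₃ ρ₂ → IsV3Rep α β ν₁ ν₂ ρ₃ →
        ¬ ∃ f : V12 α β ≃+ V3 α β,
            ∀ (x : QM α β) (v : V12 α β), f (ρ₂ (op x) v) = ρ₃ (op x) (f v)) := by
  have hfoα : IsOfFinOrder α := orderOf_pos_iff.mp hoα
  have hfoβ : IsOfFinOrder β := orderOf_pos_iff.mp hoβ
  have hord_ab : 0 < orderOf (α * β) := orderOf_pos_iff.mpr (hfoα.mul hfoβ)
  have hord_ab' : 0 < orderOf (α * β⁻¹) := orderOf_pos_iff.mpr (hfoα.mul (isOfFinOrder_iff_pow_eq_one.mpr ⟨orderOf β, hoβ, by rw [inv_pow, pow_orderOf_eq_one, inv_one]⟩))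
  have hl2 : 0 < l2 α β := hord_ab'
  have hl1 : 0 < l1 α β := by
    unfold l1; split <;> omega
  have hl1ge : orderOf (α * β) ≤ l1 α β := by
    unfold l1; split <;> omega
  haveI : NeZero (l1 α β) := ⟨hl1.ne'⟩
  haveI : NeZero (l2 α β) := ⟨hl2.ne'⟩
  haveI : NeZero (orderOf (α * β)) := ⟨hord_ab.ne'⟩
  have e12ne : e12 α β 0 0 ≠ 0 := by
    intro h
    have := congrFun h ((0 : ZMod (l1 α β)), (0 : ZMod (l2 α β)))
    rw [e12, Pi.single_eq_same] at this
    exact one_ne_zero this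
  -- Part 1 : X₁₁^{l₁} acts invertibly on V₁(μ)
  have P1 : ∀ μ₁ μ₂ μ₃ μ₄ : K, μ₁ ≠ 0 → μ₂ ≠ 0 → μ₃ ≠ 0 → μ₄ ≠ 0 →
      ∀ ρ : (QM α β)ᵐᵒᵖ →ₐ[K] Module.End K (V12 α β), IsV1Rep α β μ₁ μ₂ μ₃ μ₄ ρ →
        Function.Bijective (ρ (op (X11 α β ^ l1 α β))) := by
    intro μ₁ μ₂ μ₃ μ₄ h1 h2 h3 h4 ρ hρ
    rw [op_pow, map_pow]
    refine pow_bij _ (endo_bij _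
      ((Equiv.addRight (1 : ZMod (l1 α β))).prodCongr (Equiv.refl (ZMod (l2 α β))))
      (fun i => μ₁ * β ^ i.2.val)
      (fun i => mul_ne_zero h1 (pow_ne_zero _ hβ)) ?_) _
    rintro ⟨a, b⟩
    simpa [e12, Equiv.prodCongr_apply] using hρ.1 a b
  -- Part 2 : X₁₁^{l₁} = 0 and X₂₂^{l₁} bijective on V₂(μ)
  have P2 : ∀ μ₁ μ₂ μ₃ : K, μ₁ ≠ 0 → μ₂ ≠ 0 → μ₃ ≠ 0 →
      ∀ ρ : (QM α β)ᵐᵒᵖ →ₐ[K] Module.End K (V12 α β), IsV2Rep α β μ₁ μ₂ μ₃ ρ →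
        ρ (op (X11 α β ^ l1 α β)) = 0 ∧
        Function.Bijective (ρ (op (X22 α β ^ l1 α β))) := by
    intro μ₁ μ₂ μ₃ h1 h2 h3 ρ hρ
    constructor
    · rw [op_pow, map_pow]
      apply endo_zero
      rintro ⟨a, b⟩
      exact pow_zero_of_dec' (ρ (op (X11 α β)))
        (fun a b => μ₁⁻¹ * μ₃ * α⁻¹ * (α⁻¹ * β) ^ b.val * ((α * β) ^ a.val - 1))
        (fun a b => hρ.1 a b) (l1 α β) le_rfl a b
    · rw [op_pow, map_pow]
      refine pow_bij _ (endo_bij _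
        ((Equiv.addRight (1 : ZMod (l1 α β))).prodCongr (Equiv.refl (ZMod (l2 α β))))
        (fun i => if i.1.val = l1 α β - 1 then μ₁ * (α ^ (i.2.val * l1 α β))⁻¹ else μ₁)
        ?_ ?_) _
      · rintro ⟨a, b⟩
        dsimp only
        split
        · exact mul_ne_zero h1 (inv_ne_zero (pow_ne_zero _ hα))
        · exact h1
      · rintro ⟨a, b⟩
        simpa [e12, Equiv.prodCongr_apply] using hρ.2.2.2 a b
  -- Part 3 : X₁₁^{l₁} = 0 and X₂₂^{l₁} = 0 on V₃(μ)
  have P3 : ∀ μ₁ μ₂ : K, μ₁ ≠ 0 → μ₂ ≠ 0 →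
      ∀ ρ : (QM α β)ᵐᵒᵖ →ₐ[K] Module.End K (V3 α β), IsV3Rep α β μ₁ μ₂ ρ →
        ρ (op (X11 α β ^ l1 α β)) = 0 ∧ ρ (op (X22 α β ^ l1 α β)) = 0 := by
    intro μ₁ μ₂ h1 h2 ρ hρ
    constructor
    · rw [op_pow, map_pow]
      apply endo_zero
      rintro ⟨a, b⟩
      exact pow_zero_of_dec' (ρ (op (X11 α β)))
        (fun a b => μ₂ * α⁻¹ * (α⁻¹ * β) ^ b.val * ((α * β) ^ a.val - 1))
        (fun a b => hρ.1 a b) (l1 α β) hl1ge a b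
    · rw [op_pow, map_pow]
      apply endo_zero
      rintro ⟨a, b⟩
      refine pow_zero_of_inc' (ρ (op (X22 α β)))
        (fun _ _ => (1 : K)) ?_ (l1 α β) hl1ge a b
      intro a b
      rw [show (Pi.single (a, b) 1 : V3 α β) = e3 α β a b from rfl, hρ.2.2.2 a b]
      split_ifs with h
      · rw [zero_smul]
      · rw [one_smul]; rfl
  refine ⟨P1, P2, P3, ?_, ?_, ?_⟩
  · -- V₁ ≇ V₂
    intro μ₁ μ₂ μ₃ μ₄ ν₁ ν₂ ν₃ hμ1 hμ2 hμ3 hμ4 hν1 hν2 hν3 ρ₁ ρ₂ hρ₁ hρ₂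
    rintro ⟨f, hf⟩
    have hb := P1 μ₁ μ₂ μ₃ μ₄ hμ1 hμ2 hμ3 hμ4 ρ₁ hρ₁
    have hz := (P2 ν₁ ν₂ ν₃ hν1 hν2 hν3 ρ₂ hρ₂).1
    have h0 : ∀ v, ρ₁ (op (X11 α β ^ l1 α β)) v = 0 := by
      intro v
      have h := hf (X11 α β ^ l1 α β) v
      rw [hz, LinearMap.zero_apply] at h
      exact f.injective (by rw [h, map_zero])
    exact e12ne (hb.1 (by rw [h0, map_zero]))
  · -- V₁ ≇ V₃
    intro μ₁ μ₂ μ₃ μ₄ ν₁ ν₂ hμ1 hμ2 hμ3 hμ4 hν1 hν2 ρ₁ ρ₃ hρ₁ hρ₃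
    rintro ⟨f, hf⟩
    have hb := P1 μ₁ μ₂ μ₃ μ₄ hμ1 hμ2 hμ3 hμ4 ρ₁ hρ₁
    have hz := (P3 ν₁ ν₂ hν1 hν2 ρ₃ hρ₃).1
    have h0 : ∀ v, ρ₁ (op (X11 α β ^ l1 α β)) v = 0 := by
      intro v
      have h := hf (X11 α β ^ l1 α β) v
      rw [hz, LinearMap.zero_apply] at h
      exact f.injective (by rw [h, map_zero])
    exact e12ne (hb.1 (by rw [h0, map_zero]))
  · -- V₂ ≇ V₃
    intro μ₁ μ₂ μ₃ ν₁ ν₂ hμ1 hμ2 hμ3 hν1 hν2 ρ₂ ρ₃ hρ₂ hρ₃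
    rintro ⟨f, hf⟩
    have hb := (P2 μ₁ μ₂ μ₃ hμ1 hμ2 hμ3 ρ₂ hρ₂).2
    have hz := (P3 ν₁ ν₂ hν1 hν2 ρ₃ hρ₃).2
    have h0 : ∀ v, ρ₂ (op (X22 α β ^ l1 α β)) v = 0 := by
      intro v
      have h := hf (X22 α β ^ l1 α β) v
      rw [hz, LinearMap.zero_apply] at h
      exact f.injective (by rw [h, map_zero])
    exact e12ne (hb.1 (by rw [h0, map_zero]))
end
end

section
/- For μ, λ ∈ (K*)⁴, the modules V₁(μ) and V₁(λ) are isomorphic as right M₂(α,β)-modules if and only if there exist integers u, v with 0 ≤ u ≤ l₁−1 and 0 ≤ v ≤ l₂−1 such that μ₁^{l₁} = λ₁^{l₁}β^{vl₁}, μ₂^{l₂} = λ₂^{l₂}β^{−ul₂}, μ₃ = λ₃(αβ)^{−u}(α⁻¹β)^{v} and μ₄ = λ₄(α⁻¹β)^{v}. -/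
noncomputable section

open MulOpposite

variable {K : Type*} [Field K]

-- ===== auxiliary lemmas =====

lemma qm_pow_congr {M : Type*} [Monoid M] (x : M) {n s t : ℕ} (hx : x ^ n = 1)
    (h : s % n = t % n) : x ^ s = x ^ t := by
  conv_lhs => rw [← Nat.div_add_mod s n]
  conv_rhs => rw [← Nat.div_add_mod t n]
  rw [pow_add, pow_add, pow_mul, pow_mul, hx, one_pow, one_pow, h]

lemma qm_val_add_cast {n : ℕ} [NeZero n] (a : ZMod n) (k : ℕ) (hk : k ≤ n) :
    (a + (k : ZMod n)).val = if a.val + k < n then a.val + k else a.val + k - n := by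
  have hbv := a.val_lt
  rcases eq_or_lt_of_le hk with rfl | hk
  · rw [ZMod.natCast_self, add_zero]
    split <;> omega
  · rw [ZMod.val_add, ZMod.val_natCast, Nat.mod_eq_of_lt hk]
    split
    · exact Nat.mod_eq_of_lt ‹_›
    · rw [Nat.mod_eq_sub_mod (by omega), Nat.mod_eq_of_lt (by omega)]

lemma qm_val_add_modEq {n : ℕ} [NeZero n] (a : ZMod n) (k : ℕ) :
    (a + (k : ZMod n)).val % n = (a.val + k) % n := by
  rw [ZMod.val_add, ZMod.val_natCast, Nat.mod_mod_of_dvd _ dvd_rfl]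
  conv_rhs => rw [Nat.add_mod]
  rw [Nat.mod_eq_of_lt a.val_lt]

lemma qm_pow_val_add {M : Type*} [Monoid M] (x : M) {n : ℕ} [NeZero n] (hx : x ^ n = 1)
    (a : ZMod n) (k : ℕ) : x ^ (a + (k : ZMod n)).val = x ^ (a.val + k) :=
  qm_pow_congr x hx (qm_val_add_modEq a k)

lemma qm_succ_eq_zero_iff {n : ℕ} [NeZero n] (b : ZMod n) :
    b + 1 = 0 ↔ b.val = n - 1 := by
  have hbv := b.val_lt
  have h1 : ((1:ℕ) : ZMod n) = 1 := Nat.cast_one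
  have := qm_val_add_cast b 1 (Nat.one_le_iff_ne_zero.mpr (NeZero.ne n))
  rw [h1] at this
  rw [← ZMod.val_eq_zero, this]
  split <;> omega

lemma qm_diag_apply {ι : Type*} [Fintype ι] [DecidableEq ι]
    (L : Module.End K (ι → K)) (g : ι → K)
    (hL : ∀ i, L (Pi.single i (1:K)) = g i • (Pi.single i (1:K) : ι → K)) (w : ι → K) (p : ι) :
    L w p = g p * w p := by
  have hw : w = ∑ i, w i • (Pi.single i (1:K) : ι → K) := by
    funext j
    rw [Finset.sum_apply]
    simp [Pi.single_apply]
  conv_lhs => rw [hw, map_sum]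
  simp only [map_smul, hL]
  rw [Finset.sum_apply]
  simp [Pi.single_apply, mul_comm]


section Facts

variable (α β : K)

lemma qm_m_pos (hoα : 0 < orderOf α) (hoβ : 0 < orderOf β) : 0 < orderOf (α * β) :=
  orderOf_pos_iff.mpr ((orderOf_pos_iff.mp hoα).mul (orderOf_pos_iff.mp hoβ))

lemma qm_l2_pos (hβ : β ≠ 0) (hoα : 0 < orderOf α) (hoβ : 0 < orderOf β) : 0 < l2 α β := by
  have hβi : IsOfFinOrder β⁻¹ := by
    obtain ⟨n, hn, he⟩ := (isOfFinOrder_iff_pow_eq_one).mp (orderOf_pos_iff.mp hoβ)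
    exact (isOfFinOrder_iff_pow_eq_one).mpr ⟨n, hn, by rw [inv_pow, he, inv_one]⟩
  exact orderOf_pos_iff.mpr ((orderOf_pos_iff.mp hoα).mul hβi)

lemma qm_l1_cases : (l1 α β = orderOf (α * β) ∧ orderOf β ∣ orderOf (α * β) * l2 α β)
    ∨ l1 α β = 2 * orderOf (α * β) := by
  unfold l1
  split_ifs with h
  · exact Or.inl ⟨rfl, h⟩
  · exact Or.inr rfl

lemma qm_l1_ge2 (hoα : 0 < orderOf α) (hoβ : 0 < orderOf β) (hab : α * β ≠ 1) :
    2 ≤ l1 α β := by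
  have hm := qm_m_pos α β hoα hoβ
  have hm1 : orderOf (α * β) ≠ 1 := fun h => hab (orderOf_eq_one_iff.mp h)
  rcases qm_l1_cases α β with ⟨h, _⟩ | h <;> omega

lemma qm_ab_pow (hoα : 0 < orderOf α) (hoβ : 0 < orderOf β) : (α * β) ^ l1 α β = 1 := by
  rcases qm_l1_cases α β with ⟨h, _⟩ | h <;> rw [h]
  · exact pow_orderOf_eq_one _
  · rw [mul_comm 2, pow_mul, pow_orderOf_eq_one, one_pow]

lemma qm_g_pow (hα : α ≠ 0) (hβ : β ≠ 0) : (α⁻¹ * β) ^ l2 α β = 1 := by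
  have h : (α⁻¹ * β) * (α * β⁻¹) = 1 := by field_simp
  have h2 : (α * β⁻¹) ^ l2 α β = 1 := pow_orderOf_eq_one (α * β⁻¹)
  calc (α⁻¹ * β) ^ l2 α β = (α⁻¹ * β) ^ l2 α β * (α * β⁻¹) ^ l2 α β := by
        rw [h2, mul_one]
    _ = ((α⁻¹ * β) * (α * β⁻¹)) ^ l2 α β := (mul_pow _ _ _).symm
    _ = 1 := by rw [h, one_pow]

lemma qm_beta_pow (hα : α ≠ 0) (hβ : β ≠ 0) : β ^ (l1 α β * l2 α β) = 1 := by
  have hb2 : β * β = (α * β) * (α⁻¹ * β) := by field_simp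
  rcases qm_l1_cases α β with ⟨h, hd⟩ | h <;> rw [h]
  · exact orderOf_dvd_iff_pow_eq_one.mp hd
  · rw [show 2 * orderOf (α * β) * l2 α β = 2 * (orderOf (α * β) * l2 α β) by ring,
      pow_mul, pow_two, hb2, mul_pow, pow_mul, pow_orderOf_eq_one, one_pow, one_mul,
      mul_comm (orderOf (α*β)), pow_mul, qm_g_pow α β hα hβ, one_pow]

end Facts


section RepLemmas

variable (α β : K) (p₁ p₂ p₃ p₄ : K)
variable (ρ : (QM α β)ᵐᵒᵖ →ₐ[K] Module.End K (V12 α β))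

lemma qm_repP [NeZero (l1 α β)] [NeZero (l2 α β)]
    (hα : α ≠ 0) (hβ : β ≠ 0) (hp₂ : p₂ ≠ 0)
    (hρ : IsV1Rep α β p₁ p₂ p₃ p₄ ρ) (a : ZMod (l1 α β)) (b : ZMod (l2 α β)) :
    ρ (op (X12 α β * X21 α β)) (e12 α β a b)
      = (p₃ * (α⁻¹ * β) ^ b.val * ((α * β) ^ a.val)⁻¹) • e12 α β a b := by
  have hne : α * β ≠ 0 := mul_ne_zero hα hβ
  obtain ⟨h11, h12, h21, h22⟩ := hρ
  rw [op_mul, map_mul, Module.End.mul_apply, h12, map_smul, h21, smul_smul, sub_add_cancel]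
  have hcond : ((b - 1).val = l2 α β - 1) ↔ (b = 0) := by
    rw [← qm_succ_eq_zero_iff, sub_add_cancel]
  by_cases hb : b = 0
  · subst hb
    rw [if_pos rfl, if_pos (hcond.mpr rfl)]
    congr 1
    rw [ZMod.val_zero, pow_zero]
    field_simp
  · rw [if_neg hb, if_neg (fun h => hb (hcond.mp h))]
    congr 1
    field_simp

lemma qm_repT [NeZero (l1 α β)] [NeZero (l2 α β)]
    (hα : α ≠ 0) (hβ : β ≠ 0) (hp₁ : p₁ ≠ 0)
    (hρ : IsV1Rep α β p₁ p₂ p₃ p₄ ρ) (a : ZMod (l1 α β)) (b : ZMod (l2 α β)) :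
    ρ (op (X11 α β * X22 α β)) (e12 α β a b)
      = ((α⁻¹ * β) ^ b.val * (p₄ + β * ((α * β) ^ (a + 1).val)⁻¹ * p₃)) • e12 α β a b := by
  have hne : α * β ≠ 0 := mul_ne_zero hα hβ
  obtain ⟨h11, h12, h21, h22⟩ := hρ
  rw [op_mul, map_mul, Module.End.mul_apply, h11, map_smul, h22, smul_smul, add_sub_cancel_right]
  congr 1
  field_simp
  have hinv : α ^ b.val * α⁻¹ ^ b.val = 1 := by rw [← mul_pow, mul_inv_cancel₀ hα, one_pow]
  linear_combination (-(β * β ^ b.val * p₃) - β ^ b.val * β ^ (a + 1).val * p₄ * α ^ (a + 1).val) * hinv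

lemma qm_repR_aux [NeZero (l1 α β)] [NeZero (l2 α β)]
    (hρ : IsV1Rep α β p₁ p₂ p₃ p₄ ρ) (k : ℕ) (a : ZMod (l1 α β)) (b : ZMod (l2 α β)) :
    ((ρ (op (X11 α β)))^k) (e12 α β a b)
      = (p₁ ^ k * β ^ (b.val * k)) • e12 α β (a + (k : ZMod (l1 α β))) b := by
  induction k generalizing a with
  | zero => simp [Module.End.one_apply]
  | succ n ih =>
    rw [pow_succ, Module.End.mul_apply, hρ.1, map_smul, ih, smul_smul]
    have : a + 1 + (n : ZMod (l1 α β)) = a + ((n+1 : ℕ) : ZMod (l1 α β)) := by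
      push_cast; ring
    rw [this]
    congr 1
    ring

lemma qm_repR [NeZero (l1 α β)] [NeZero (l2 α β)]
    (hρ : IsV1Rep α β p₁ p₂ p₃ p₄ ρ) (a : ZMod (l1 α β)) (b : ZMod (l2 α β)) :
    ρ (op (X11 α β ^ l1 α β)) (e12 α β a b)
      = (p₁ ^ l1 α β * β ^ (b.val * l1 α β)) • e12 α β a b := by
  rw [op_pow, map_pow, qm_repR_aux α β p₁ p₂ p₃ p₄ ρ hρ, ZMod.natCast_self, add_zero]

lemma qm_repQ_aux [NeZero (l1 α β)] [NeZero (l2 α β)]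
    (hρ : IsV1Rep α β p₁ p₂ p₃ p₄ ρ) (k : ℕ) (hk : k ≤ l2 α β)
    (a : ZMod (l1 α β)) (b : ZMod (l2 α β)) :
    ((ρ (op (X21 α β)))^k) (e12 α β a b)
      = (p₂ ^ k * (if b.val + k < l2 α β then 1 else (β ^ (a.val * l2 α β))⁻¹))
          • e12 α β a (b + (k : ZMod (l2 α β))) := by
  induction k generalizing b with
  | zero => simp [Module.End.one_apply, b.val_lt]
  | succ n ih =>
    rw [pow_succ', Module.End.mul_apply, ih (by omega), map_smul, hρ.2.2.1, smul_smul]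
    have hcast : b + (n : ZMod (l2 α β)) + 1 = b + ((n+1 : ℕ) : ZMod (l2 α β)) := by
      push_cast; ring
    rw [hcast]
    congr 1
    rw [qm_val_add_cast b n (by omega)]
    have hbv := b.val_lt
    split_ifs <;> first | omega | ring

lemma qm_repQ [NeZero (l1 α β)] [NeZero (l2 α β)]
    (hρ : IsV1Rep α β p₁ p₂ p₃ p₄ ρ) (a : ZMod (l1 α β)) (b : ZMod (l2 α β)) :
    ρ (op (X21 α β ^ l2 α β)) (e12 α β a b)
      = (p₂ ^ l2 α β * (β ^ (a.val * l2 α β))⁻¹) • e12 α β a b := by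
  rw [op_pow, map_pow, qm_repQ_aux α β p₁ p₂ p₃ p₄ ρ hρ (l2 α β) le_rfl,
    ZMod.natCast_self, add_zero, if_neg (by omega)]

end RepLemmas


lemma qm_forward (α β : K)
    (hα : α ≠ 0) (hβ : β ≠ 0) (hoα : 0 < orderOf α) (hoβ : 0 < orderOf β)
    (hab : α * β ≠ 1)
    (μ₁ μ₂ μ₃ μ₄ ν₁ ν₂ ν₃ ν₄ : K)
    (hμ₁ : μ₁ ≠ 0) (hμ₂ : μ₂ ≠ 0) (hμ₃ : μ₃ ≠ 0) (hμ₄ : μ₄ ≠ 0)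
    (hν₁ : ν₁ ≠ 0) (hν₂ : ν₂ ≠ 0) (hν₃ : ν₃ ≠ 0) (hν₄ : ν₄ ≠ 0)
    (ρμ ρν : (QM α β)ᵐᵒᵖ →ₐ[K] Module.End K (V12 α β))
    (hρμ : IsV1Rep α β μ₁ μ₂ μ₃ μ₄ ρμ) (hρν : IsV1Rep α β ν₁ ν₂ ν₃ ν₄ ρν)
    (f : V12 α β ≃ₗ[K] V12 α β)
    (hf : ∀ (x : QM α β) (w : V12 α β), f (ρμ (op x) w) = ρν (op x) (f w)) :
    ∃ u v : ℕ, u ≤ l1 α β - 1 ∧ v ≤ l2 α β - 1 ∧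
      μ₁ ^ l1 α β = ν₁ ^ l1 α β * β ^ (v * l1 α β) ∧
      μ₂ ^ l2 α β = ν₂ ^ l2 α β * (β ^ (u * l2 α β))⁻¹ ∧
      μ₃ = ν₃ * ((α * β) ^ u)⁻¹ * (α⁻¹ * β) ^ v ∧
      μ₄ = ν₄ * (α⁻¹ * β) ^ v := by
  have hl2p := qm_l2_pos α β hβ hoα hoβ
  have hl1g2 := qm_l1_ge2 α β hoα hoβ hab
  have hl1p : 0 < l1 α β := by omega
  haveI : NeZero (l1 α β) := ⟨hl1p.ne'⟩
  haveI : NeZero (l2 α β) := ⟨hl2p.ne'⟩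
  have hne : α * β ≠ 0 := mul_ne_zero hα hβ
  have hg : α⁻¹ * β ≠ 0 := mul_ne_zero (inv_ne_zero hα) hβ
  have habp := qm_ab_pow α β hoα hoβ
  set w : V12 α β := f (e12 α β 0 0) with hwdef
  have hw0 : w ≠ 0 := by
    intro h
    have h2 : e12 α β 0 0 = 0 := f.map_eq_zero_iff.mp h
    have h3 := congrFun h2 (0, 0)
    simp [e12] at h3
  obtain ⟨p, hp⟩ : ∃ p, w p ≠ 0 := by
    by_contra h
    push_neg at h
    exact hw0 (funext h)
  obtain ⟨U, V⟩ := p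
  have key : ∀ (z : QM α β) (lam : K) (g : ZMod (l1 α β) → ZMod (l2 α β) → K),
      (ρμ (op z) (e12 α β 0 0) = lam • e12 α β 0 0) →
      (∀ a b, ρν (op z) (e12 α β a b) = g a b • e12 α β a b) →
      lam = g U V := by
    intro z lam g h1 h2
    have h := hf z (e12 α β 0 0)
    rw [h1, map_smul] at h
    have hL : ∀ i : ZMod (l1 α β) × ZMod (l2 α β),
        (ρν (op z)) (Pi.single i (1:K)) = (fun q => g q.1 q.2) i • (Pi.single i (1:K) : V12 α β) := by
      rintro ⟨a, b⟩
      exact h2 a b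
    have hd := qm_diag_apply (ρν (op z)) (fun q => g q.1 q.2) hL w (U, V)
    have he : (lam • w) (U, V) = g U V * w (U, V) := by rw [h]; exact hd
    rw [Pi.smul_apply, smul_eq_mul] at he
    exact mul_right_cancel₀ hp he
  have hR : μ₁ ^ l1 α β = ν₁ ^ l1 α β * β ^ (V.val * l1 α β) :=
    key (X11 α β ^ l1 α β) (μ₁ ^ l1 α β)
      (fun a b => ν₁ ^ l1 α β * β ^ (b.val * l1 α β))
      (by simpa using qm_repR α β μ₁ μ₂ μ₃ μ₄ ρμ hρμ 0 0)
      (fun a b => qm_repR α β ν₁ ν₂ ν₃ ν₄ ρν hρν a b)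
  have hQ : μ₂ ^ l2 α β = ν₂ ^ l2 α β * (β ^ (U.val * l2 α β))⁻¹ :=
    key (X21 α β ^ l2 α β) (μ₂ ^ l2 α β)
      (fun a b => ν₂ ^ l2 α β * (β ^ (a.val * l2 α β))⁻¹)
      (by simpa using qm_repQ α β μ₁ μ₂ μ₃ μ₄ ρμ hρμ 0 0)
      (fun a b => qm_repQ α β ν₁ ν₂ ν₃ ν₄ ρν hρν a b)
  have hP : μ₃ = ν₃ * (α⁻¹ * β) ^ V.val * ((α * β) ^ U.val)⁻¹ :=
    key (X12 α β * X21 α β) μ₃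
      (fun a b => ν₃ * (α⁻¹ * β) ^ b.val * ((α * β) ^ a.val)⁻¹)
      (by simpa using qm_repP α β μ₁ μ₂ μ₃ μ₄ ρμ hα hβ hμ₂ hρμ 0 0)
      (fun a b => qm_repP α β ν₁ ν₂ ν₃ ν₄ ρν hα hβ hν₂ hρν a b)
  have hT := key (X11 α β * X22 α β)
      ((α⁻¹ * β) ^ (0 : ZMod (l2 α β)).val
        * (μ₄ + β * ((α * β) ^ ((0 : ZMod (l1 α β)) + 1).val)⁻¹ * μ₃))
      (fun a b => (α⁻¹ * β) ^ b.val * (ν₄ + β * ((α * β) ^ (a + 1).val)⁻¹ * ν₃))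
      (qm_repT α β μ₁ μ₂ μ₃ μ₄ ρμ hα hβ hμ₁ hρμ 0 0)
      (fun a b => qm_repT α β ν₁ ν₂ ν₃ ν₄ ρν hα hβ hν₁ hρν a b)
  refine ⟨U.val, V.val, by have := U.val_lt; omega, by have := V.val_lt; omega,
    hR, hQ, by rw [hP]; ring, ?_⟩
  have h01 : ((0 : ZMod (l1 α β)) + 1).val = 1 := by
    rw [zero_add, ZMod.val_one_eq_one_mod]
    exact Nat.mod_eq_of_lt hl1g2
  have hU1 : (α * β) ^ (U + 1).val = (α * β) ^ (U.val + 1) := by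
    have h := qm_pow_val_add (α * β) habp U 1
    rwa [Nat.cast_one] at h
  beta_reduce at hT
  rw [ZMod.val_zero, pow_zero, one_mul, h01, hU1, pow_one, pow_succ] at hT
  -- hT : μ₄ + β * (α*β)⁻¹ * μ₃ = (α⁻¹β)^V.val * (ν₄ + β * ((α*β)^U.val * (α*β))⁻¹ * ν₃)
  have hT2 : (α⁻¹ * β) ^ V.val * (β * ((α * β) ^ U.val * (α * β))⁻¹ * ν₃)
      = β * (α * β)⁻¹ * μ₃ := by
    rw [hP]
    field_simp
  rw [mul_add, hT2] at hT
  rw [add_right_cancel hT, mul_comm]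


section Reverse

variable (α β : K)

lemma qm_div_eq {X A B Y C D : K} (hB : B ≠ 0) (hD : D ≠ 0)
    (h : X * A * D = Y * C * B) : X * (A / B) = Y * (C / D) := by
  rw [mul_div_assoc', mul_div_assoc', div_eq_div_iff hB hD]
  linear_combination h

/-- The rescaling coefficients for the intertwiner in the reverse direction. -/
def qmC (μ₁ μ₂ ν₁ ν₂ : K) (u v : ℕ) (a : ZMod (l1 α β)) (b : ZMod (l2 α β)) : K :=
  (ν₁ ^ a.val * β ^ ((b + (v : ZMod (l2 α β))).val * a.val) * ν₂ ^ b.val)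
    / (μ₁ ^ a.val * β ^ (b.val * a.val) * μ₂ ^ b.val
        * (if l2 α β ≤ b.val + v then β ^ (u * l2 α β) else 1))

lemma qmC_ne_zero (μ₁ μ₂ ν₁ ν₂ : K) (u v : ℕ)
    (hβ : β ≠ 0) (hμ₁ : μ₁ ≠ 0) (hμ₂ : μ₂ ≠ 0) (hν₁ : ν₁ ≠ 0) (hν₂ : ν₂ ≠ 0)
    (a : ZMod (l1 α β)) (b : ZMod (l2 α β)) :
    qmC α β μ₁ μ₂ ν₁ ν₂ u v a b ≠ 0 := by
  unfold qmC
  split_ifs <;>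
  · apply div_ne_zero <;>
      simp [pow_ne_zero, hβ, hμ₁, hμ₂, hν₁, hν₂]

lemma qm_modEq_mul {n s t : ℕ} (c : ℕ) (h : s % n = t % n) :
    (s * c) % (n * c) = (t * c) % (n * c) := by
  have h2 : s ≡ t [MOD n] := h
  exact Nat.ModEq.mul_right' (c := c) h2

lemma qm_E1 [NeZero (l1 α β)] [NeZero (l2 α β)] (μ₁ μ₂ ν₁ ν₂ : K) (u v : ℕ)
    (hβ : β ≠ 0) (hμ₁ : μ₁ ≠ 0) (hν₁ : ν₁ ≠ 0) (hμ₂ : μ₂ ≠ 0) (hν₂ : ν₂ ≠ 0)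
    (hβl : β ^ (l1 α β * l2 α β) = 1)
    (h1 : μ₁ ^ l1 α β = ν₁ ^ l1 α β * β ^ (v * l1 α β))
    (a : ZMod (l1 α β)) (b : ZMod (l2 α β)) :
    μ₁ * β ^ b.val * qmC α β μ₁ μ₂ ν₁ ν₂ u v (a + 1) b
      = ν₁ * β ^ (b + (v : ZMod (l2 α β))).val * qmC α β μ₁ μ₂ ν₁ ν₂ u v a b := by
  have hav := a.val_lt
  have hval := qm_val_add_cast a 1 (Nat.one_le_iff_ne_zero.mpr (NeZero.ne _))
  rw [Nat.cast_one] at hval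
  unfold qmC
  rw [hval]
  by_cases hc : a.val + 1 < l1 α β
  · rw [if_pos hc]
    split_ifs with hif <;>
    · apply qm_div_eq
      · exact mul_ne_zero (mul_ne_zero (mul_ne_zero (pow_ne_zero _ hμ₁)
          (pow_ne_zero _ hβ)) (pow_ne_zero _ hμ₂)) (by simp [pow_ne_zero, hβ])
      · exact mul_ne_zero (mul_ne_zero (mul_ne_zero (pow_ne_zero _ hμ₁)
          (pow_ne_zero _ hβ)) (pow_ne_zero _ hμ₂)) (by simp [pow_ne_zero, hβ])
      · ring
  · rw [if_neg hc]
    have h0 : a.val + 1 - l1 α β = 0 := by omega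
    rw [h0]
    obtain ⟨j, hj⟩ : ∃ j, l1 α β = j + 1 := ⟨l1 α β - 1, by omega⟩
    have haj : a.val = j := by omega
    have hβW : β ^ ((b + (v : ZMod (l2 α β))).val * l1 α β)
        = β ^ ((b.val + v) * l1 α β) := by
      refine qm_pow_congr β hβl ?_
      have h := qm_val_add_modEq b v
      have h2 := qm_modEq_mul (l1 α β) h
      rwa [Nat.mul_comm (l2 α β) (l1 α β)] at h2
    have key : μ₁ ^ (j + 1) * β ^ (b.val * (j + 1))
        = ν₁ ^ (j + 1) * β ^ ((b + (v : ZMod (l2 α β))).val * (j + 1)) := by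
      rw [← hj, h1, hβW, mul_assoc, ← pow_add]
      congr 2
      ring
    rw [haj]
    split_ifs with hif
    · apply qm_div_eq
      · exact mul_ne_zero (mul_ne_zero (mul_ne_zero (pow_ne_zero _ hμ₁)
          (pow_ne_zero _ hβ)) (pow_ne_zero _ hμ₂)) (by simp [pow_ne_zero, hβ])
      · exact mul_ne_zero (mul_ne_zero (mul_ne_zero (pow_ne_zero _ hμ₁)
          (pow_ne_zero _ hβ)) (pow_ne_zero _ hμ₂)) (by simp [pow_ne_zero, hβ])
      · linear_combination (ν₂ ^ b.val * μ₂ ^ b.val * β ^ (u * l2 α β)) * key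
    · apply qm_div_eq
      · exact mul_ne_zero (mul_ne_zero (mul_ne_zero (pow_ne_zero _ hμ₁)
          (pow_ne_zero _ hβ)) (pow_ne_zero _ hμ₂)) (by simp [pow_ne_zero, hβ])
      · exact mul_ne_zero (mul_ne_zero (mul_ne_zero (pow_ne_zero _ hμ₁)
          (pow_ne_zero _ hβ)) (pow_ne_zero _ hμ₂)) (by simp [pow_ne_zero, hβ])
      · linear_combination (ν₂ ^ b.val * μ₂ ^ b.val) * key

end Reverse


section Reverse2

variable (α β : K)

lemma qm_div_eq2 {X P A B Y Q C D : K} (hP : P ≠ 0) (hB : B ≠ 0) (hQ : Q ≠ 0) (hD : D ≠ 0)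
    (h : X * A * (Q * D) = Y * C * (P * B)) : (X / P) * (A / B) = (Y / Q) * (C / D) := by
  rw [div_mul_div_comm, div_mul_div_comm,
    div_eq_div_iff (mul_ne_zero hP hB) (mul_ne_zero hQ hD)]
  linear_combination h

lemma qm_div_eq3 {X P A B Y C D : K} (hP : P ≠ 0) (hB : B ≠ 0) (hD : D ≠ 0)
    (h : X * A * D = Y * C * (P * B)) : (X / P) * (A / B) = Y * (C / D) := by
  rw [div_mul_div_comm, mul_div_assoc', div_eq_div_iff (mul_ne_zero hP hB) hD]
  linear_combination h

lemma qm_div_eq4 {X A B Y Q C D : K} (hB : B ≠ 0) (hQ : Q ≠ 0) (hD : D ≠ 0)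
    (h : X * A * (Q * D) = Y * C * B) : X * (A / B) = (Y / Q) * (C / D) := by
  rw [div_mul_div_comm, mul_div_assoc', div_eq_div_iff hB (mul_ne_zero hQ hD)]
  linear_combination h

lemma qm_E2 [NeZero (l1 α β)] [NeZero (l2 α β)] (μ₁ μ₂ ν₁ ν₂ : K) (u v : ℕ)
    (hβ : β ≠ 0) (hμ₁ : μ₁ ≠ 0) (hν₁ : ν₁ ≠ 0) (hμ₂ : μ₂ ≠ 0) (hν₂ : ν₂ ≠ 0)
    (hv : v < l2 α β)
    (hβl : β ^ (l1 α β * l2 α β) = 1)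
    (h2 : μ₂ ^ l2 α β = ν₂ ^ l2 α β * (β ^ (u * l2 α β))⁻¹)
    (a : ZMod (l1 α β)) (b : ZMod (l2 α β)) :
    (if b.val = l2 α β - 1 then μ₂ * (β ^ (a.val * l2 α β))⁻¹ else μ₂)
        * qmC α β μ₁ μ₂ ν₁ ν₂ u v a (b + 1)
      = (if (b + (v : ZMod (l2 α β))).val = l2 α β - 1
            then ν₂ * (β ^ ((a + (u : ZMod (l1 α β))).val * l2 α β))⁻¹ else ν₂)
        * qmC α β μ₁ μ₂ ν₁ ν₂ u v a b := by
  have hbv := b.val_lt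
  have hl2p : 0 < l2 α β := Nat.pos_of_ne_zero (NeZero.ne _)
  have h2' : μ₂ ^ l2 α β * β ^ (u * l2 α β) = ν₂ ^ l2 α β := by
    rw [h2]
    field_simp
  have hval1 := qm_val_add_cast b 1 hl2p
  rw [Nat.cast_one] at hval1
  have hvalv := qm_val_add_cast b v hv.le
  have hAU : β ^ ((a + (u : ZMod (l1 α β))).val * l2 α β)
      = β ^ ((a.val + u) * l2 α β) := by
    refine qm_pow_congr β hβl ?_
    exact qm_modEq_mul (l2 α β) (qm_val_add_modEq a u)
  simp only [← div_eq_mul_inv]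
  unfold qmC
  by_cases hA : b.val = l2 α β - 1
  · rw [if_pos hA]
    have e_b1 : (b + 1).val = 0 := by rw [hval1]; split_ifs <;> omega
    have e_b1v : ((b + 1) + (v : ZMod (l2 α β))).val = v := by
      rw [qm_val_add_cast (b + 1) v hv.le, e_b1]
      split_ifs <;> omega
    have keyA : μ₂ * μ₂ ^ b.val * β ^ (u * l2 α β) = ν₂ * ν₂ ^ b.val := by
      rw [← pow_succ', ← pow_succ', show b.val + 1 = l2 α β by omega]
      exact h2'
    rw [e_b1, e_b1v]
    by_cases hv0 : v = 0
    · -- leaf A0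
      have e_bv : (b + (v : ZMod (l2 α β))).val = b.val := by
        rw [hvalv]
        split_ifs <;> omega
      rw [e_bv, if_neg (show ¬ (l2 α β ≤ 0 + v) by omega),
        if_pos (show b.val = l2 α β - 1 from hA),
        if_neg (show ¬ (l2 α β ≤ b.val + v) by omega), hAU, hv0]
      apply qm_div_eq2
      · apply_rules [mul_ne_zero, pow_ne_zero, one_ne_zero]
      · apply_rules [mul_ne_zero, pow_ne_zero, one_ne_zero]
      · apply_rules [mul_ne_zero, pow_ne_zero, one_ne_zero]
      · apply_rules [mul_ne_zero, pow_ne_zero, one_ne_zero]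
      · linear_combination (ν₁ ^ a.val * μ₁ ^ a.val * β ^ (b.val * a.val)
            * β ^ (a.val * l2 α β)) * keyA
    · -- leaf A1
      have e_bv : (b + (v : ZMod (l2 α β))).val = v - 1 := by
        rw [hvalv]
        split_ifs <;> omega
      rw [e_bv, if_neg (show ¬ (l2 α β ≤ 0 + v) by omega),
        if_neg (show ¬ (v - 1 = l2 α β - 1) by omega),
        if_pos (show l2 α β ≤ b.val + v by omega)]
      obtain ⟨k, hk⟩ : ∃ k, v = k + 1 := ⟨v - 1, by omega⟩
      have hbl2 : l2 α β = b.val + 1 := by omega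
      rw [show v - 1 = k by omega, hk,
        show a.val * l2 α β = a.val * (b.val + 1) from by rw [← hbl2]]
      apply qm_div_eq3
      · apply_rules [mul_ne_zero, pow_ne_zero, one_ne_zero]
      · apply_rules [mul_ne_zero, pow_ne_zero, one_ne_zero]
      · apply_rules [mul_ne_zero, pow_ne_zero, one_ne_zero]
      · linear_combination (ν₁ ^ a.val * μ₁ ^ a.val * β ^ (b.val * a.val)
            * β ^ (k * a.val) * β ^ a.val) * keyA
  · rw [if_neg hA]
    have e_b1 : (b + 1).val = b.val + 1 := by rw [hval1, if_pos (by omega)]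
    have e_b1v := qm_val_add_cast (b + 1) v hv.le
    rw [e_b1] at e_b1v
    rw [e_b1, e_b1v, hvalv]
    by_cases hB0 : b.val + 1 + v < l2 α β
    · -- leaf B0
      rw [if_pos (show b.val + 1 + v < l2 α β from hB0),
        if_neg (show ¬ (l2 α β ≤ b.val + 1 + v) by omega),
        if_pos (show b.val + v < l2 α β by omega),
        if_neg (show ¬ (b.val + v = l2 α β - 1) by omega),
        if_neg (show ¬ (l2 α β ≤ b.val + v) by omega)]
      apply qm_div_eq
      · apply_rules [mul_ne_zero, pow_ne_zero, one_ne_zero]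
      · apply_rules [mul_ne_zero, pow_ne_zero, one_ne_zero]
      · ring
    · by_cases hB1 : b.val + 1 + v = l2 α β
      · -- leaf B1
        rw [if_neg (show ¬ (b.val + 1 + v < l2 α β) by omega),
          show b.val + 1 + v - l2 α β = 0 by omega,
          if_pos (show l2 α β ≤ b.val + 1 + v by omega),
          if_pos (show b.val + v < l2 α β by omega),
          if_pos (show b.val + v = l2 α β - 1 by omega),
          if_neg (show ¬ (l2 α β ≤ b.val + v) by omega), hAU,
          show (a.val + u) * l2 α β = (a.val + u) * (b.val + 1 + v) from by rw [hB1],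
          show u * l2 α β = u * (b.val + 1 + v) from by rw [hB1]]
        apply qm_div_eq4
        · apply_rules [mul_ne_zero, pow_ne_zero, one_ne_zero]
        · apply_rules [mul_ne_zero, pow_ne_zero, one_ne_zero]
        · apply_rules [mul_ne_zero, pow_ne_zero, one_ne_zero]
        · ring
      · -- leaf B2
        rw [if_neg (show ¬ (b.val + 1 + v < l2 α β) by omega),
          show b.val + 1 + v - l2 α β = (b.val + v - l2 α β) + 1 by omega,
          if_pos (show l2 α β ≤ b.val + 1 + v by omega),
          if_neg (show ¬ (b.val + v < l2 α β) by omega),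
          if_neg (show ¬ (b.val + v - l2 α β = l2 α β - 1) by omega),
          if_pos (show l2 α β ≤ b.val + v by omega)]
        apply qm_div_eq
        · apply_rules [mul_ne_zero, pow_ne_zero, one_ne_zero]
        · apply_rules [mul_ne_zero, pow_ne_zero, one_ne_zero]
        · ring

end Reverse2


section Reverse3

variable (α β : K)

lemma qm_decomp {ι : Type*} [Fintype ι] [DecidableEq ι] (w : ι → K) :
    w = ∑ i, w i • (Pi.single i (1:K) : ι → K) := by
  funext j
  rw [Finset.sum_apply]
  simp [Pi.single_apply]

lemma qm_lift {ι : Type*} [Fintype ι] [DecidableEq ι]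
    (F T S : (ι → K) →ₗ[K] (ι → K))
    (h : ∀ i, F (T (Pi.single i 1)) = S (F (Pi.single i 1))) (w : ι → K) :
    F (T w) = S (F w) := by
  conv_lhs => rw [qm_decomp w]
  conv_rhs => rw [qm_decomp w]
  simp only [map_sum, map_smul, h]

lemma qm_match3 (μ₃ ν₃ : K) (u v : ℕ)
    (hα : α ≠ 0) (hβ : β ≠ 0)
    (hαβ1 : (α * β) ^ l1 α β = 1) (hγ1 : (α⁻¹ * β) ^ l2 α β = 1)
    (h3 : μ₃ = ν₃ * ((α * β) ^ u)⁻¹ * (α⁻¹ * β) ^ v)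
    {s t s' t' : ℕ} (hs : s' % l2 α β = (s + v) % l2 α β)
    (ht : t' % l1 α β = (t + u) % l1 α β) :
    μ₃ * (α⁻¹ * β) ^ s * ((α * β) ^ t)⁻¹ = ν₃ * (α⁻¹ * β) ^ s' * ((α * β) ^ t')⁻¹ := by
  rw [qm_pow_congr _ hγ1 hs, qm_pow_congr _ hαβ1 ht, h3, pow_add, pow_add, mul_inv]
  ring

lemma qm_match4 (μ₃ μ₄ ν₃ ν₄ : K) (u v : ℕ)
    (hα : α ≠ 0) (hβ : β ≠ 0)
    (hαβ1 : (α * β) ^ l1 α β = 1) (hγ1 : (α⁻¹ * β) ^ l2 α β = 1)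
    (h3 : μ₃ = ν₃ * ((α * β) ^ u)⁻¹ * (α⁻¹ * β) ^ v)
    (h4 : μ₄ = ν₄ * (α⁻¹ * β) ^ v)
    {s t s' t' : ℕ} (hs : s' % l2 α β = (s + v) % l2 α β)
    (ht : t' % l1 α β = (t + u) % l1 α β) :
    (α⁻¹ * β) ^ s * (μ₄ + β * ((α * β) ^ t)⁻¹ * μ₃)
      = (α⁻¹ * β) ^ s' * (ν₄ + β * ((α * β) ^ t')⁻¹ * ν₃) := by
  rw [qm_pow_congr _ hγ1 hs, qm_pow_congr _ hαβ1 ht, h3, h4, pow_add, pow_add, mul_inv]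
  ring

lemma qm_AB [NeZero (l2 α β)] (p₂ p₃ : K) (hα : α ≠ 0) (hβ : β ≠ 0) (hp₂ : p₂ ≠ 0)
    (a : ZMod (l1 α β)) (b : ZMod (l2 α β)) :
    (if (b - 1).val = l2 α β - 1 then p₂ * (β ^ (a.val * l2 α β))⁻¹ else p₂)
      * (if b = 0 then p₂⁻¹ * p₃ * β ^ (a.val * l2 α β) * ((α * β) ^ a.val)⁻¹
          else p₂⁻¹ * p₃ * (α⁻¹ * β) ^ b.val * ((α * β) ^ a.val)⁻¹)
      = p₃ * (α⁻¹ * β) ^ b.val * ((α * β) ^ a.val)⁻¹ := by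
  have hne : α * β ≠ 0 := mul_ne_zero hα hβ
  have hcond : ((b - 1).val = l2 α β - 1) ↔ (b = 0) := by
    rw [← qm_succ_eq_zero_iff, sub_add_cancel]
  by_cases hb : b = 0
  · rw [if_pos (hcond.mpr hb), if_pos hb, hb, ZMod.val_zero, pow_zero]
    field_simp
  · rw [if_neg (fun h => hb (hcond.mp h)), if_neg hb]
    field_simp

lemma qm_TC (p₁ E : K) (hα : α ≠ 0) (hβ : β ≠ 0) (hp₁ : p₁ ≠ 0) (n : ℕ) :
    p₁ * β ^ n * (p₁⁻¹ * (α ^ n)⁻¹ * E) = (α⁻¹ * β) ^ n * E := by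
  field_simp
  rw [div_pow, mul_div_assoc', eq_div_iff (pow_ne_zero n hα)]
  ring

lemma qm_E3 [NeZero (l1 α β)] [NeZero (l2 α β)] (μ₁ μ₂ μ₃ ν₁ ν₂ ν₃ : K) (u v : ℕ)
    (hα : α ≠ 0) (hβ : β ≠ 0)
    (hμ₁ : μ₁ ≠ 0) (hν₁ : ν₁ ≠ 0) (hμ₂ : μ₂ ≠ 0) (hν₂ : ν₂ ≠ 0)
    (hv : v < l2 α β)
    (hβl : β ^ (l1 α β * l2 α β) = 1)
    (hαβ1 : (α * β) ^ l1 α β = 1) (hγ1 : (α⁻¹ * β) ^ l2 α β = 1)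
    (h2 : μ₂ ^ l2 α β = ν₂ ^ l2 α β * (β ^ (u * l2 α β))⁻¹)
    (h3 : μ₃ = ν₃ * ((α * β) ^ u)⁻¹ * (α⁻¹ * β) ^ v)
    (a : ZMod (l1 α β)) (b : ZMod (l2 α β)) :
    (if b = 0 then μ₂⁻¹ * μ₃ * β ^ (a.val * l2 α β) * ((α * β) ^ a.val)⁻¹
        else μ₂⁻¹ * μ₃ * (α⁻¹ * β) ^ b.val * ((α * β) ^ a.val)⁻¹)
      * qmC α β μ₁ μ₂ ν₁ ν₂ u v a (b - 1)
    = (if b + (v : ZMod (l2 α β)) = 0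
          then ν₂⁻¹ * ν₃ * β ^ ((a + (u : ZMod (l1 α β))).val * l2 α β)
            * ((α * β) ^ (a + (u : ZMod (l1 α β))).val)⁻¹
          else ν₂⁻¹ * ν₃ * (α⁻¹ * β) ^ (b + (v : ZMod (l2 α β))).val
            * ((α * β) ^ (a + (u : ZMod (l1 α β))).val)⁻¹)
      * qmC α β μ₁ μ₂ ν₁ ν₂ u v a b := by
  have hAμ0 : (if (b - 1).val = l2 α β - 1 then μ₂ * (β ^ (a.val * l2 α β))⁻¹ else μ₂) ≠ 0 := by
    split_ifs
    · exact mul_ne_zero hμ₂ (inv_ne_zero (pow_ne_zero _ hβ))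
    · exact hμ₂
  apply mul_left_cancel₀ hAμ0
  have hABμ := qm_AB α β μ₂ μ₃ hα hβ hμ₂ a b
  have hABν := qm_AB α β ν₂ ν₃ hα hβ hν₂ (a + (u : ZMod (l1 α β))) (b + (v : ZMod (l2 α β)))
  have hE2 := qm_E2 α β μ₁ μ₂ ν₁ ν₂ u v hβ hμ₁ hν₁ hμ₂ hν₂ hv hβl h2 a (b - 1)
  rw [sub_add_cancel, show (b - 1) + (v : ZMod (l2 α β)) = (b + (v : ZMod (l2 α β))) - 1 by ring]
    at hE2
  have hmatch := qm_match3 α β μ₃ ν₃ u v hα hβ hαβ1 hγ1 h3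
    (qm_val_add_modEq b v) (qm_val_add_modEq a u)
  linear_combination (qmC α β μ₁ μ₂ ν₁ ν₂ u v a (b - 1)) * hABμ
    + (qmC α β μ₁ μ₂ ν₁ ν₂ u v a (b - 1)) * hmatch
    - (qmC α β μ₁ μ₂ ν₁ ν₂ u v a (b - 1)) * hABν
    - (if b + (v : ZMod (l2 α β)) = 0
          then ν₂⁻¹ * ν₃ * β ^ ((a + (u : ZMod (l1 α β))).val * l2 α β)
            * ((α * β) ^ (a + (u : ZMod (l1 α β))).val)⁻¹
          else ν₂⁻¹ * ν₃ * (α⁻¹ * β) ^ (b + (v : ZMod (l2 α β))).val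
            * ((α * β) ^ (a + (u : ZMod (l1 α β))).val)⁻¹) * hE2

lemma qm_E4 [NeZero (l1 α β)] [NeZero (l2 α β)] (μ₁ μ₂ μ₃ μ₄ ν₁ ν₂ ν₃ ν₄ : K) (u v : ℕ)
    (hα : α ≠ 0) (hβ : β ≠ 0)
    (hμ₁ : μ₁ ≠ 0) (hν₁ : ν₁ ≠ 0) (hμ₂ : μ₂ ≠ 0) (hν₂ : ν₂ ≠ 0)
    (hv : v < l2 α β)
    (hβl : β ^ (l1 α β * l2 α β) = 1)
    (hαβ1 : (α * β) ^ l1 α β = 1) (hγ1 : (α⁻¹ * β) ^ l2 α β = 1)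
    (h1 : μ₁ ^ l1 α β = ν₁ ^ l1 α β * β ^ (v * l1 α β))
    (h3 : μ₃ = ν₃ * ((α * β) ^ u)⁻¹ * (α⁻¹ * β) ^ v)
    (h4 : μ₄ = ν₄ * (α⁻¹ * β) ^ v)
    (a : ZMod (l1 α β)) (b : ZMod (l2 α β)) :
    (μ₁⁻¹ * (α ^ b.val)⁻¹ * (μ₄ + β * ((α * β) ^ a.val)⁻¹ * μ₃))
      * qmC α β μ₁ μ₂ ν₁ ν₂ u v (a - 1) b
    = (ν₁⁻¹ * (α ^ (b + (v : ZMod (l2 α β))).val)⁻¹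
        * (ν₄ + β * ((α * β) ^ (a + (u : ZMod (l1 α β))).val)⁻¹ * ν₃))
      * qmC α β μ₁ μ₂ ν₁ ν₂ u v a b := by
  apply mul_left_cancel₀ (mul_ne_zero hμ₁ (pow_ne_zero b.val hβ)
    : μ₁ * β ^ b.val ≠ 0)
  have hE1 := qm_E1 α β μ₁ μ₂ ν₁ ν₂ u v hβ hμ₁ hν₁ hμ₂ hν₂ hβl h1 (a - 1) b
  rw [sub_add_cancel] at hE1
  have hTCμ := qm_TC α β μ₁ (μ₄ + β * ((α * β) ^ a.val)⁻¹ * μ₃) hα hβ hμ₁ b.val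
  have hTCν := qm_TC α β ν₁ (ν₄ + β * ((α * β) ^ (a + (u : ZMod (l1 α β))).val)⁻¹ * ν₃)
    hα hβ hν₁ (b + (v : ZMod (l2 α β))).val
  have hmatch := qm_match4 α β μ₃ μ₄ ν₃ ν₄ u v hα hβ hαβ1 hγ1 h3 h4
    (qm_val_add_modEq b v) (qm_val_add_modEq a u)
  have hE1' : ν₁ * β ^ (b + (v : ZMod (l2 α β))).val * qmC α β μ₁ μ₂ ν₁ ν₂ u v (a - 1) b
      = μ₁ * β ^ b.val * qmC α β μ₁ μ₂ ν₁ ν₂ u v a b := hE1.symm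
  linear_combination (qmC α β μ₁ μ₂ ν₁ ν₂ u v (a - 1) b) * hTCμ
    + (qmC α β μ₁ μ₂ ν₁ ν₂ u v (a - 1) b) * hmatch
    - (qmC α β μ₁ μ₂ ν₁ ν₂ u v (a - 1) b) * hTCν
    + (ν₁⁻¹ * (α ^ (b + (v : ZMod (l2 α β))).val)⁻¹
        * (ν₄ + β * ((α * β) ^ (a + (u : ZMod (l1 α β))).val)⁻¹ * ν₃)) * hE1'

end Reverse3


/-- Theorem 7.1 of the paper. For `μ, ν ∈ (K*)⁴`, the modules
`V₁(μ)` and `V₁(ν)` are isomorphic as right `M₂(α,β)`-modules iff there exist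
`0 ≤ u ≤ l₁−1`, `0 ≤ v ≤ l₂−1` with `μ₁^{l₁} = ν₁^{l₁}β^{vl₁}`,
`μ₂^{l₂} = ν₂^{l₂}β^{−ul₂}`, `μ₃ = ν₃(αβ)^{−u}(α⁻¹β)^v`, `μ₄ = ν₄(α⁻¹β)^v`. -/
theorem stmt17 [IsAlgClosed K] (α β : K)
    (hα : α ≠ 0) (hβ : β ≠ 0) (hoα : 0 < orderOf α) (hoβ : 0 < orderOf β)
    (hab : α * β ≠ 1)
    (μ₁ μ₂ μ₃ μ₄ ν₁ ν₂ ν₃ ν₄ : K)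
    (hμ₁ : μ₁ ≠ 0) (hμ₂ : μ₂ ≠ 0) (hμ₃ : μ₃ ≠ 0) (hμ₄ : μ₄ ≠ 0)
    (hν₁ : ν₁ ≠ 0) (hν₂ : ν₂ ≠ 0) (hν₃ : ν₃ ≠ 0) (hν₄ : ν₄ ≠ 0)
    (ρμ ρν : (QM α β)ᵐᵒᵖ →ₐ[K] Module.End K (V12 α β))
    (hρμ : IsV1Rep α β μ₁ μ₂ μ₃ μ₄ ρμ) (hρν : IsV1Rep α β ν₁ ν₂ ν₃ ν₄ ρν) :
    (∃ f : V12 α β ≃ₗ[K] V12 α β,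
        ∀ (x : QM α β) (w : V12 α β), f (ρμ (op x) w) = ρν (op x) (f w)) ↔
    ∃ u v : ℕ, u ≤ l1 α β - 1 ∧ v ≤ l2 α β - 1 ∧
      μ₁ ^ l1 α β = ν₁ ^ l1 α β * β ^ (v * l1 α β) ∧
      μ₂ ^ l2 α β = ν₂ ^ l2 α β * (β ^ (u * l2 α β))⁻¹ ∧
      μ₃ = ν₃ * ((α * β) ^ u)⁻¹ * (α⁻¹ * β) ^ v ∧
      μ₄ = ν₄ * (α⁻¹ * β) ^ v := by
  have hl2p := qm_l2_pos α β hβ hoα hoβ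
  have hl1g2 := qm_l1_ge2 α β hoα hoβ hab
  have hl1p : 0 < l1 α β := by omega
  haveI : NeZero (l1 α β) := ⟨hl1p.ne'⟩
  haveI : NeZero (l2 α β) := ⟨hl2p.ne'⟩
  constructor
  · rintro ⟨f, hf⟩
    exact qm_forward α β hα hβ hoα hoβ hab μ₁ μ₂ μ₃ μ₄ ν₁ ν₂ ν₃ ν₄ hμ₁ hμ₂ hμ₃ hμ₄
      hν₁ hν₂ hν₃ hν₄ ρμ ρν hρμ hρν f hf
  · rintro ⟨u, v, hu, hv, h1, h2, h3, h4⟩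
    have huv : u < l1 α β := by omega
    have hvv : v < l2 α β := by omega
    have hβl := qm_beta_pow α β hα hβ
    have hαβ1 := qm_ab_pow α β hoα hoβ
    have hγ1 := qm_g_pow α β hα hβ
    have hc0 := qmC_ne_zero α β μ₁ μ₂ ν₁ ν₂ u v hβ hμ₁ hμ₂ hν₁ hν₂
    let F : V12 α β →ₗ[K] V12 α β :=
      { toFun := fun w p => qmC α β μ₁ μ₂ ν₁ ν₂ u v
            (p.1 - (u : ZMod (l1 α β))) (p.2 - (v : ZMod (l2 α β)))
          * w (p.1 - (u : ZMod (l1 α β)), p.2 - (v : ZMod (l2 α β)))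
        map_add' := fun w₁ w₂ => by funext p; simp only [Pi.add_apply]; ring
        map_smul' := fun r w => by
          funext p
          simp only [Pi.smul_apply, smul_eq_mul, RingHom.id_apply]
          ring }
    let G : V12 α β →ₗ[K] V12 α β :=
      { toFun := fun w p => (qmC α β μ₁ μ₂ ν₁ ν₂ u v p.1 p.2)⁻¹
          * w (p.1 + (u : ZMod (l1 α β)), p.2 + (v : ZMod (l2 α β)))
        map_add' := fun w₁ w₂ => by funext p; simp only [Pi.add_apply]; ring
        map_smul' := fun r w => by
          funext p
          simp only [Pi.smul_apply, smul_eq_mul, RingHom.id_apply]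
          ring }
    have hFG : ∀ w, F (G w) = w := by
      intro w
      funext p
      show qmC α β μ₁ μ₂ ν₁ ν₂ u v (p.1 - ↑u) (p.2 - ↑v)
        * ((qmC α β μ₁ μ₂ ν₁ ν₂ u v (p.1 - ↑u) (p.2 - ↑v))⁻¹
          * w (p.1 - ↑u + ↑u, p.2 - ↑v + ↑v)) = w p
      rw [sub_add_cancel, sub_add_cancel, ← mul_assoc, mul_inv_cancel₀ (hc0 _ _), one_mul]
    have hGF : ∀ w, G (F w) = w := by
      intro w
      funext p
      show (qmC α β μ₁ μ₂ ν₁ ν₂ u v p.1 p.2)⁻¹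
          * (qmC α β μ₁ μ₂ ν₁ ν₂ u v (p.1 + ↑u - ↑u) (p.2 + ↑v - ↑v)
            * w (p.1 + ↑u - ↑u, p.2 + ↑v - ↑v)) = w p
      rw [add_sub_cancel_right, add_sub_cancel_right, ← mul_assoc,
        inv_mul_cancel₀ (hc0 _ _), one_mul]
    have hFe : ∀ a b, F (e12 α β a b)
        = qmC α β μ₁ μ₂ ν₁ ν₂ u v a b
            • e12 α β (a + (u : ZMod (l1 α β))) (b + (v : ZMod (l2 α β))) := by
      intro a b
      funext p
      have hiff : (p.1 - (u : ZMod (l1 α β)), p.2 - (v : ZMod (l2 α β))) = (a, b)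
          ↔ p = (a + (u : ZMod (l1 α β)), b + (v : ZMod (l2 α β))) := by
        simp [Prod.ext_iff, sub_eq_iff_eq_add]
      show qmC α β μ₁ μ₂ ν₁ ν₂ u v (p.1 - ↑u) (p.2 - ↑v)
          * (e12 α β a b) (p.1 - ↑u, p.2 - ↑v) = _
      simp only [e12, Pi.smul_apply, Pi.single_apply, smul_eq_mul]
      by_cases hp : p = (a + (u : ZMod (l1 α β)), b + (v : ZMod (l2 α β)))
      · rw [if_pos (hiff.mpr hp), if_pos hp]
        obtain ⟨hx, hy⟩ := Prod.mk.injEq _ _ _ _ ▸ (hiff.mpr hp)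
        rw [hx, hy]
      · rw [if_neg (fun h => hp (hiff.mp h)), if_neg hp, mul_zero, mul_zero]
    have case11 : ∀ w, F (ρμ (op (X11 α β)) w) = ρν (op (X11 α β)) (F w) := by
      apply qm_lift
      rintro ⟨a, b⟩
      show F (ρμ (op (X11 α β)) (e12 α β a b)) = ρν (op (X11 α β)) (F (e12 α β a b))
      rw [hρμ.1, map_smul, hFe, hFe, map_smul, hρν.1, smul_smul, smul_smul,
        show a + 1 + (u : ZMod (l1 α β)) = a + (u : ZMod (l1 α β)) + 1 by ring]
      congr 1
      linear_combination qm_E1 α β μ₁ μ₂ ν₁ ν₂ u v hβ hμ₁ hν₁ hμ₂ hν₂ hβl h1 a b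
    have case21 : ∀ w, F (ρμ (op (X21 α β)) w) = ρν (op (X21 α β)) (F w) := by
      apply qm_lift
      rintro ⟨a, b⟩
      show F (ρμ (op (X21 α β)) (e12 α β a b)) = ρν (op (X21 α β)) (F (e12 α β a b))
      rw [hρμ.2.2.1, map_smul, hFe, hFe, map_smul, hρν.2.2.1, smul_smul, smul_smul,
        show b + 1 + (v : ZMod (l2 α β)) = b + (v : ZMod (l2 α β)) + 1 by ring]
      congr 1
      linear_combination qm_E2 α β μ₁ μ₂ ν₁ ν₂ u v hβ hμ₁ hν₁ hμ₂ hν₂ hvv hβl h2 a b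
    have case12 : ∀ w, F (ρμ (op (X12 α β)) w) = ρν (op (X12 α β)) (F w) := by
      apply qm_lift
      rintro ⟨a, b⟩
      show F (ρμ (op (X12 α β)) (e12 α β a b)) = ρν (op (X12 α β)) (F (e12 α β a b))
      rw [hρμ.2.1, map_smul, hFe, hFe, map_smul, hρν.2.1, smul_smul, smul_smul,
        show b - 1 + (v : ZMod (l2 α β)) = b + (v : ZMod (l2 α β)) - 1 by ring]
      congr 1
      linear_combination qm_E3 α β μ₁ μ₂ μ₃ ν₁ ν₂ ν₃ u v hα hβ hμ₁ hν₁ hμ₂ hν₂ hvv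
        hβl hαβ1 hγ1 h2 h3 a b
    have case22 : ∀ w, F (ρμ (op (X22 α β)) w) = ρν (op (X22 α β)) (F w) := by
      apply qm_lift
      rintro ⟨a, b⟩
      show F (ρμ (op (X22 α β)) (e12 α β a b)) = ρν (op (X22 α β)) (F (e12 α β a b))
      rw [hρμ.2.2.2, map_smul, hFe, hFe, map_smul, hρν.2.2.2, smul_smul, smul_smul,
        show a - 1 + (u : ZMod (l1 α β)) = a + (u : ZMod (l1 α β)) - 1 by ring]
      congr 1
      linear_combination qm_E4 α β μ₁ μ₂ μ₃ μ₄ ν₁ ν₂ ν₃ ν₄ u v hα hβ hμ₁ hν₁ hμ₂ hν₂ hvv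
        hβl hαβ1 hγ1 h1 h3 h4 a b
    have hall : ∀ y : FreeAlgebra K (Fin 4), ∀ w : V12 α β,
        F (ρμ (op (RingQuot.mkAlgHom K (QMRel α β) y)) w)
          = ρν (op (RingQuot.mkAlgHom K (QMRel α β) y)) (F w) := by
      intro y
      induction y using FreeAlgebra.induction with
      | grade0 r =>
        intro w
        rw [AlgHom.commutes, ← MulOpposite.algebraMap_apply, AlgHom.commutes, AlgHom.commutes]
        simp [Module.algebraMap_end_apply, map_smul]
      | grade1 i =>
        fin_cases i
        · exact case11
        · exact case12
        · exact case21
        · exact case22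
      | mul x y ihx ihy =>
        intro w
        rw [map_mul, op_mul, map_mul]
        show F (ρμ (op (RingQuot.mkAlgHom K (QMRel α β) y))
            (ρμ (op (RingQuot.mkAlgHom K (QMRel α β) x)) w)) = _
        rw [ihy, ihx, map_mul]
        rfl
      | add x y ihx ihy =>
        intro w
        rw [map_add, op_add, map_add]
        show F (ρμ (op (RingQuot.mkAlgHom K (QMRel α β) x)) w
            + ρμ (op (RingQuot.mkAlgHom K (QMRel α β) y)) w) = _
        rw [map_add, ihx, ihy, map_add]
        rfl
    refine ⟨LinearEquiv.ofLinear F G (LinearMap.ext hFG) (LinearMap.ext hGF), ?_⟩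
    intro x w
    obtain ⟨y, rfl⟩ := RingQuot.mkAlgHom_surjective K (QMRel α β) x
    simpa only [LinearEquiv.ofLinear_apply] using hall y w
end
end

section
/- For μ, λ ∈ (K*)², the modules V₃(μ) and V₃(λ) are isomorphic as right M₂(α,β)-modules if and only if there exists an integer v with 0 ≤ v ≤ l₂−1 such that μ₁^{l₂} = λ₁^{l₂} and μ₂ = λ₂(α⁻¹β)^{v}. -/
noncomputable section

open MulOpposite

variable {K : Type*} [Field K]

lemma aux_pow_mod {t : K} {m : ℕ} (ht : t ^ m = 1) (a : ℕ) : t ^ (a % m) = t ^ a := by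
  conv_rhs => rw [← Nat.div_add_mod a m]
  rw [pow_add, pow_mul, ht, one_pow, one_mul]

lemma aux_pow_val_add {t : K} {m : ℕ} [NeZero m] (ht : t ^ m = 1) (x y : ZMod m) :
    t ^ (x + y).val = t ^ x.val * t ^ y.val := by
  rw [ZMod.val_add, aux_pow_mod ht, pow_add]

lemma aux_pow_val_natCast {t : K} {m : ℕ} [NeZero m] (ht : t ^ m = 1) (k : ℕ) :
    t ^ ((k : ZMod m)).val = t ^ k := by rw [ZMod.val_natCast, aux_pow_mod ht]

lemma aux_pow_val_add_one {t : K} {m : ℕ} [NeZero m] (ht : t ^ m = 1) (x : ZMod m) :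
    t ^ (x + 1).val = t ^ x.val * t := by
  have h1 : ((1 : ℕ) : ZMod m) = 1 := Nat.cast_one
  rw [← h1, aux_pow_val_add ht, aux_pow_val_natCast ht, pow_one]

lemma aux_pow_val_sub_one {t : K} {m : ℕ} [NeZero m] (ht : t ^ m = 1) (x : ZMod m) :
    t ^ (x - 1).val * t = t ^ x.val := by
  have := aux_pow_val_add_one ht (x - 1)
  rw [sub_add_cancel] at this
  rw [← this]

lemma aux_eq_sum {I : Type*} [Fintype I] [DecidableEq I] (u : I → K) :
    u = ∑ p, u p • (Pi.single p 1 : I → K) := by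
  funext j
  rw [Finset.sum_apply]
  simp [Pi.single_apply]

lemma aux_shift {I : Type*} [Fintype I] [DecidableEq I]
    (T : (I → K) →ₗ[K] (I → K)) (σ : I → I) (hσ : Function.Injective σ)
    (lam : I → K) (h : ∀ p, T (Pi.single p 1) = lam p • (Pi.single (σ p) 1 : I → K))
    (u : I → K) (p : I) : T u (σ p) = lam p * u p := by
  conv_lhs => rw [aux_eq_sum u]
  rw [map_sum, Finset.sum_apply]
  simp_rw [map_smul, h]
  simp [Pi.single_apply, hσ.eq_iff]
  ring

lemma aux_intertwine {I : Type*} [Fintype I] [DecidableEq I]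
    (f : (I → K) ≃ₗ[K] (I → K)) (Tμ Tν : (I → K) →ₗ[K] (I → K))
    (h : ∀ p, f (Tμ (Pi.single p 1)) = Tν (f (Pi.single p 1))) (w : I → K) :
    f (Tμ w) = Tν (f w) := by
  have hw := aux_eq_sum (K := K) w
  calc f (Tμ w) = f (Tμ (∑ p, w p • (Pi.single p 1 : I → K))) := by rw [← hw]
    _ = ∑ p, w p • f (Tμ (Pi.single p 1)) := by rw [map_sum, map_sum]; simp_rw [map_smul]
    _ = ∑ p, w p • Tν (f (Pi.single p 1)) := by simp_rw [h]
    _ = Tν (f w) := by simp_rw [← map_smul, ← map_sum, ← hw]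

lemma aux_pow_inj {γ : K} (hγ : γ ≠ 0) : ∀ {i j : ℕ}, i < orderOf γ → j < orderOf γ →
    γ ^ i = γ ^ j → i = j := by
  suffices H : ∀ i j, i ≤ j → j < orderOf γ → γ ^ i = γ ^ j → i = j by
    intro i j hi hj h
    rcases le_total i j with hle | hle
    · exact H i j hle hj h
    · exact (H j i hle hi h.symm).symm
  intro i j hle hj h
  have h2 : γ ^ i * γ ^ (j - i) = γ ^ i * 1 := by
    rw [mul_one, ← pow_add, Nat.add_sub_cancel' hle, h]
  have h3 : γ ^ (j - i) = 1 := mul_left_cancel₀ (pow_ne_zero _ hγ) h2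
  have h4 : orderOf γ ∣ j - i := orderOf_dvd_of_pow_eq_one h3
  have h5 : j - i = 0 := Nat.eq_zero_of_dvd_of_lt h4 (lt_of_le_of_lt (Nat.sub_le j i) hj)
  omega

set_option maxHeartbeats 1000000 in
/-- Theorem 7.3 of the paper. For `μ, ν ∈ (K*)²`, the modules
`V₃(μ)` and `V₃(ν)` are isomorphic as right `M₂(α,β)`-modules iff there exists
`0 ≤ v ≤ l₂−1` with `μ₁^{l₂} = ν₁^{l₂}` and `μ₂ = ν₂(α⁻¹β)^v`. -/
theorem stmt19 [IsAlgClosed K] (α β : K)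
    (hα : α ≠ 0) (hβ : β ≠ 0) (hoα : 0 < orderOf α) (hoβ : 0 < orderOf β)
    (hab : α * β ≠ 1)
    (μ₁ μ₂ ν₁ ν₂ : K)
    (hμ₁ : μ₁ ≠ 0) (hμ₂ : μ₂ ≠ 0) (hν₁ : ν₁ ≠ 0) (hν₂ : ν₂ ≠ 0)
    (ρμ ρν : (QM α β)ᵐᵒᵖ →ₐ[K] Module.End K (V3 α β))
    (hρμ : IsV3Rep α β μ₁ μ₂ ρμ) (hρν : IsV3Rep α β ν₁ ν₂ ρν) :
    (∃ f : V3 α β ≃ₗ[K] V3 α β,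
        ∀ (x : QM α β) (w : V3 α β), f (ρμ (op x) w) = ρν (op x) (f w)) ↔
    ∃ v : ℕ, v ≤ l2 α β - 1 ∧
      μ₁ ^ l2 α β = ν₁ ^ l2 α β ∧
      μ₂ = ν₂ * (α⁻¹ * β) ^ v := by
  classical
  obtain ⟨h11μ, h12μ, h21μ, h22μ⟩ := hρμ
  obtain ⟨h11ν, h12ν, h21ν, h22ν⟩ := hρν
  have hfoα : IsOfFinOrder α := orderOf_pos_iff.mp hoα
  have hfoβ : IsOfFinOrder β := orderOf_pos_iff.mp hoβ
  have hb1 : β * β ^ (orderOf β - 1) = 1 := by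
    rw [← pow_succ', Nat.sub_add_cancel hoβ, pow_orderOf_eq_one]
  have hβi : β⁻¹ = β ^ (orderOf β - 1) := inv_eq_of_mul_eq_one_right hb1
  have hfoβinv : IsOfFinOrder β⁻¹ := hβi ▸ hfoβ.pow
  have hfoab : IsOfFinOrder (α * β) := (Commute.all α β).isOfFinOrder_mul hfoα hfoβ
  have hfoab' : IsOfFinOrder (α * β⁻¹) := (Commute.all α β⁻¹).isOfFinOrder_mul hfoα hfoβinv
  have hnpos : 0 < orderOf (α * β) := orderOf_pos_iff.mpr hfoab
  have hmpos : 0 < l2 α β := orderOf_pos_iff.mpr hfoab'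
  haveI : NeZero (orderOf (α * β)) := ⟨hnpos.ne'⟩
  haveI : NeZero (l2 α β) := ⟨hmpos.ne'⟩
  have hγ0 : α⁻¹ * β ≠ 0 := mul_ne_zero (inv_ne_zero hα) hβ
  have hγab : (α⁻¹ * β) * (α * β⁻¹) = 1 := by field_simp
  have hγab' : ∀ k : ℕ, (α⁻¹ * β) ^ k * (α * β⁻¹) ^ k = 1 := fun k => by
    rw [← mul_pow, hγab, one_pow]
  have horder : orderOf (α⁻¹ * β) = l2 α β := by
    apply orderOf_eq_orderOf_iff.mpr
    intro k
    constructor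
    · intro hk
      have := hγab' k
      rwa [hk, one_mul] at this
    · intro hk
      have := hγab' k
      rwa [hk, mul_one] at this
  have hγm : (α⁻¹ * β) ^ l2 α β = 1 := by rw [← horder]; exact pow_orderOf_eq_one _
  have haval : ∀ a : ZMod (orderOf (α * β)), a ≠ 0 → (α * β) ^ a.val ≠ 1 := by
    intro a ha h
    have hd := orderOf_dvd_of_pow_eq_one h
    have h0 : a.val = 0 := Nat.eq_zero_of_dvd_of_lt hd (ZMod.val_lt a)
    exact ha (by rwa [ZMod.val_eq_zero] at h0)
  have hbinj : ∀ b b' : ZMod (l2 α β), (α⁻¹ * β) ^ b.val = (α⁻¹ * β) ^ b'.val → b = b' := by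
    intro b b' h
    have hlb : b.val < orderOf (α⁻¹ * β) := by rw [horder]; exact ZMod.val_lt b
    have hlb' : b'.val < orderOf (α⁻¹ * β) := by rw [horder]; exact ZMod.val_lt b'
    exact ZMod.val_injective _ (aux_pow_inj hγ0 hlb hlb' h)
  constructor
  · rintro ⟨f, hf⟩
    obtain ⟨u, hu⟩ : ∃ u, f (e3 α β 0 0) = u := ⟨_, rfl⟩
    have he00 : (e3 α β 0 0 : V3 α β) ≠ 0 := by
      intro h
      have h0 := congrFun h (0, 0)
      rw [e3, Pi.single_eq_same] at h0
      simp at h0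
    have hu0 : u ≠ 0 := by
      rw [← hu]
      intro h
      exact he00 (f.map_eq_zero_iff.mp h)
    have hX11 : ρν (op (X11 α β)) u = 0 := by
      have h := hf (X11 α β) (e3 α β 0 0)
      rw [h11μ 0 0, if_pos rfl, zero_smul, map_zero, hu] at h
      exact h.symm
    have hsupp : ∀ p : ZMod (orderOf (α * β)) × ZMod (l2 α β), p.1 ≠ 0 → u p = 0 := by
      rintro ⟨a, b⟩ ha
      have hσ : Function.Injective
          (fun p : ZMod (orderOf (α * β)) × ZMod (l2 α β) => (p.1 - 1, p.2)) := by
        rintro ⟨x1, x2⟩ ⟨y1, y2⟩ hxy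
        simp only [Prod.mk.injEq] at hxy
        exact Prod.ext (by have := hxy.1; exact sub_left_injective this) hxy.2
      have hs := aux_shift (ρν (op (X11 α β)) : V3 α β →ₗ[K] V3 α β)
          (fun p : ZMod (orderOf (α * β)) × ZMod (l2 α β) => (p.1 - 1, p.2)) hσ
          (fun p => if p.1 = 0 then 0
            else ν₂ * α⁻¹ * (α⁻¹ * β) ^ p.2.val * ((α * β) ^ p.1.val - 1))
          (by rintro ⟨a', b'⟩; exact h11ν a' b') u (a, b)
      rw [hX11] at hs
      simp only [Pi.zero_apply] at hs
      rw [if_neg ha] at hs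
      have hC : ν₂ * α⁻¹ * (α⁻¹ * β) ^ b.val * ((α * β) ^ a.val - 1) ≠ 0 := by
        refine mul_ne_zero (mul_ne_zero (mul_ne_zero hν₂ (inv_ne_zero hα))
          (pow_ne_zero _ hγ0)) (sub_ne_zero.mpr (haval a ha))
      exact (mul_eq_zero.mp hs.symm).resolve_left hC
    have hσ12 : Function.Injective
        (fun p : ZMod (orderOf (α * β)) × ZMod (l2 α β) => (p.1, p.2 - 1)) := by
      rintro ⟨x1, x2⟩ ⟨y1, y2⟩ hxy
      simp only [Prod.mk.injEq] at hxy
      exact Prod.ext hxy.1 (sub_left_injective hxy.2)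
    have hσ21 : Function.Injective
        (fun p : ZMod (orderOf (α * β)) × ZMod (l2 α β) => (p.1, p.2 + 1)) := by
      rintro ⟨x1, x2⟩ ⟨y1, y2⟩ hxy
      simp only [Prod.mk.injEq] at hxy
      exact Prod.ext hxy.1 (by have := hxy.2; exact add_right_cancel this)
    have hsX12 : ∀ p : ZMod (orderOf (α * β)) × ZMod (l2 α β),
        (ρν (op (X12 α β)) u) (p.1, p.2 - 1) =
          (ν₁⁻¹ * ν₂ * β ^ p.1.val * (α⁻¹ * β) ^ p.2.val) * u p :=
      aux_shift (ρν (op (X12 α β)) : V3 α β →ₗ[K] V3 α β) _ hσ12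
        (fun p => ν₁⁻¹ * ν₂ * β ^ p.1.val * (α⁻¹ * β) ^ p.2.val)
        (by rintro ⟨a', b'⟩; exact h12ν a' b') u
    have hsX21 : ∀ (w' : V3 α β) (p : ZMod (orderOf (α * β)) × ZMod (l2 α β)),
        (ρν (op (X21 α β)) w') (p.1, p.2 + 1) = (ν₁ * α ^ p.1.val) * w' p :=
      fun w' => aux_shift (ρν (op (X21 α β)) : V3 α β →ₗ[K] V3 α β) _ hσ21
        (fun p => ν₁ * α ^ p.1.val)
        (by rintro ⟨a', b'⟩; exact h21ν a' b') w'
    have e1 : ρμ (op (X12 α β)) (e3 α β 0 0) = (μ₁⁻¹ * μ₂) • e3 α β 0 (0 - 1) := by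
      rw [h12μ 0 0]
      simp [ZMod.val_zero]
    have e2 : ρμ (op (X21 α β)) ((μ₁⁻¹ * μ₂) • e3 α β 0 (0 - 1)) = μ₂ • e3 α β 0 0 := by
      rw [map_smul, h21μ 0 (0 - 1), sub_add_cancel, smul_smul]
      simp only [ZMod.val_zero, pow_zero, mul_one]
      congr 1
      field_simp
    have hB : ρν (op (X21 α β)) (ρν (op (X12 α β)) u) = μ₂ • u := by
      have h21' := hf (X21 α β) (ρμ (op (X12 α β)) (e3 α β 0 0))
      rw [hf (X12 α β) (e3 α β 0 0)] at h21'
      rw [e1, e2, map_smul, hu] at h21'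
      exact h21'.symm
    have heigen : ∀ b' : ZMod (l2 α β), u (0, b') ≠ 0 →
        ν₂ * (α⁻¹ * β) ^ b'.val = μ₂ := by
      intro b' hb'
      have h1' := hsX21 (ρν (op (X12 α β)) u) (0, b' - 1)
      rw [sub_add_cancel] at h1'
      have h2' := hsX12 (0, b')
      rw [h2'] at h1'
      have h3' : (ρν (op (X21 α β)) (ρν (op (X12 α β)) u)) (0, b') = μ₂ * u (0, b') := by
        rw [hB]; simp
      rw [h3'] at h1'
      have hv0 : ((0 : ZMod (orderOf (α * β)))).val = 0 := ZMod.val_zero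
      rw [hv0] at h1'
      simp only [pow_zero, mul_one, one_mul] at h1'
      have : ν₂ * (α⁻¹ * β) ^ b'.val * u (0, b') = μ₂ * u (0, b') := by
        rw [h1']; field_simp
      exact mul_right_cancel₀ hb' this
    obtain ⟨p, hp⟩ := Function.ne_iff.mp hu0
    obtain ⟨a, b⟩ := p
    simp only [Pi.zero_apply] at hp
    have ha : a = 0 := by
      by_contra h
      exact hp (hsupp (a, b) h)
    subst ha
    have hkey : μ₂ = ν₂ * (α⁻¹ * β) ^ b.val := (heigen b hp).symm
    have huniq : ∀ b' : ZMod (l2 α β), u (0, b') ≠ 0 → b' = b := by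
      intro b' hb'
      apply hbinj
      have := (heigen b' hb').trans hkey
      exact mul_left_cancel₀ hν₂ this
    have husingle : u = u (0, b) • e3 α β 0 b := by
      funext q
      obtain ⟨a', b'⟩ := q
      rw [e3, Pi.smul_apply, Pi.single_apply, smul_eq_mul]
      by_cases h1' : a' = 0
      · subst h1'
        by_cases h2' : b' = b
        · subst h2'; simp
        · rw [if_neg (by simp [h2'])]
          rw [mul_zero]
          by_contra h
          exact h2' (huniq b' h)
      · rw [if_neg (by simp [h1']), mul_zero]
        exact hsupp (a', b') h1'
    have hiterμ : ∀ k : ℕ, (fun w => ρμ (op (X21 α β)) w)^[k] (e3 α β 0 0) =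
        (μ₁ ^ k) • e3 α β 0 ((k : ZMod (l2 α β))) := by
      intro k
      induction k with
      | zero => simp
      | succ k ih =>
        rw [Function.iterate_succ_apply', ih]
        show ρμ (op (X21 α β)) _ = _
        rw [map_smul, h21μ 0 _, ZMod.val_zero, pow_zero, mul_one, smul_smul,
          ← pow_succ, Nat.cast_add, Nat.cast_one]
    have hiterν : ∀ k : ℕ, (fun w => ρν (op (X21 α β)) w)^[k] (e3 α β 0 b) =
        (ν₁ ^ k) • e3 α β 0 (b + (k : ZMod (l2 α β))) := by
      intro k
      induction k with
      | zero => simp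
      | succ k ih =>
        rw [Function.iterate_succ_apply', ih]
        show ρν (op (X21 α β)) _ = _
        rw [map_smul, h21ν 0 _, ZMod.val_zero, pow_zero, mul_one, smul_smul,
          ← pow_succ, Nat.cast_add, Nat.cast_one, add_assoc]
    have hfiter : ∀ k : ℕ, ∀ w : V3 α β,
        f ((fun w => ρμ (op (X21 α β)) w)^[k] w) =
          (fun w => ρν (op (X21 α β)) w)^[k] (f w) := by
      intro k
      induction k with
      | zero => intro w; simp
      | succ k ih =>
        intro w
        rw [Function.iterate_succ_apply, Function.iterate_succ_apply]
        show f ((fun w => ρμ (op (X21 α β)) w)^[k] (ρμ (op (X21 α β)) w)) = _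
        rw [ih (ρμ (op (X21 α β)) w), hf (X21 α β) w]
    have hiterlin : ∀ (k : ℕ) (c : K) (w' : V3 α β),
        (fun w => ρν (op (X21 α β)) w)^[k] (c • w') =
          c • (fun w => ρν (op (X21 α β)) w)^[k] w' := by
      intro k
      induction k with
      | zero => intro c w'; simp
      | succ k ih =>
        intro c w'
        rw [Function.iterate_succ_apply, Function.iterate_succ_apply]
        show (fun w => ρν (op (X21 α β)) w)^[k] (ρν (op (X21 α β)) (c • w')) = _
        rw [map_smul, ih]
    have hfin : (μ₁ ^ l2 α β) • u = (ν₁ ^ l2 α β) • u := by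
      have hL := hfiter (l2 α β) (e3 α β 0 0)
      rw [hiterμ (l2 α β), map_smul, ZMod.natCast_self, hu] at hL
      conv_rhs at hL => rw [husingle, hiterlin, hiterν]
      rw [ZMod.natCast_self, add_zero] at hL
      rw [hL]
      conv_rhs => rw [husingle]
      rw [smul_smul, smul_smul]
      congr 1
      ring
    have := congrFun hfin (0, b)
    simp only [Pi.smul_apply, smul_eq_mul] at this
    have hpow : μ₁ ^ l2 α β = ν₁ ^ l2 α β := mul_right_cancel₀ hp this
    exact ⟨b.val, Nat.le_sub_one_of_lt (ZMod.val_lt b), hpow, hkey⟩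

  · rintro ⟨v, -, h1, h2⟩
    have ht0 : ν₁ * μ₁⁻¹ ≠ 0 := mul_ne_zero hν₁ (inv_ne_zero hμ₁)
    have htm : (ν₁ * μ₁⁻¹) ^ l2 α β = 1 := by
      rw [mul_pow, inv_pow, ← h1, mul_inv_cancel₀ (pow_ne_zero _ hμ₁)]
    set v' : ZMod (l2 α β) := (v : ZMod (l2 α β)) with hv'
    let F : V3 α β →ₗ[K] V3 α β :=
      { toFun := fun w p => (ν₁ * μ₁⁻¹) ^ (p.2 - v').val * w (p.1, p.2 - v')
        map_add' := fun w w' => by funext p; simp [mul_add]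
        map_smul' := fun c w => by funext p; simp [smul_eq_mul]; ring }
    let G : V3 α β →ₗ[K] V3 α β :=
      { toFun := fun w p => ((ν₁ * μ₁⁻¹) ^ p.2.val)⁻¹ * w (p.1, p.2 + v')
        map_add' := fun w w' => by funext p; simp [mul_add]
        map_smul' := fun c w => by funext p; simp [smul_eq_mul]; ring }
    have hFG : F ∘ₗ G = LinearMap.id := by
      apply LinearMap.ext
      intro w
      funext p
      show (ν₁ * μ₁⁻¹) ^ (p.2 - v').val *
        (((ν₁ * μ₁⁻¹) ^ (p.2 - v').val)⁻¹ * w (p.1, p.2 - v' + v')) = w p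
      rw [sub_add_cancel, ← mul_assoc, mul_inv_cancel₀ (pow_ne_zero _ ht0), one_mul]
    have hGF : G ∘ₗ F = LinearMap.id := by
      apply LinearMap.ext
      intro w
      funext p
      show ((ν₁ * μ₁⁻¹) ^ p.2.val)⁻¹ *
        ((ν₁ * μ₁⁻¹) ^ (p.2 + v' - v').val * w (p.1, p.2 + v' - v')) = w p
      rw [add_sub_cancel_right, ← mul_assoc, inv_mul_cancel₀ (pow_ne_zero _ ht0), one_mul]
    let f : V3 α β ≃ₗ[K] V3 α β := LinearEquiv.ofLinear F G hFG hGF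
    have hfb : ∀ (a : ZMod (orderOf (α * β))) (b : ZMod (l2 α β)),
        f (e3 α β a b) = ((ν₁ * μ₁⁻¹) ^ b.val) • e3 α β a (b + v') := by
      intro a b
      funext p
      obtain ⟨a', b'⟩ := p
      show (ν₁ * μ₁⁻¹) ^ (b' - v').val * (e3 α β a b) (a', b' - v') =
        (((ν₁ * μ₁⁻¹) ^ b.val) • e3 α β a (b + v')) (a', b')
      rw [e3, e3, Pi.smul_apply, Pi.single_apply, Pi.single_apply, smul_eq_mul]
      by_cases hp : a' = a ∧ b' = b + v'
      · obtain ⟨rfl, rfl⟩ := hp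
        rw [if_pos (by simp), if_pos rfl, add_sub_cancel_right]
      · rw [if_neg, if_neg]
        · ring
        · intro h; rw [Prod.mk.injEq] at h; exact hp ⟨h.1, h.2⟩
        · intro h
          rw [Prod.mk.injEq] at h
          exact hp ⟨h.1, by rw [← h.2, sub_add_cancel]⟩
    have hγv : (α⁻¹ * β) ^ (v'.val) = (α⁻¹ * β) ^ v := aux_pow_val_natCast hγm v
    have htv : ∀ b : ZMod (l2 α β),
        (α⁻¹ * β) ^ (b + v').val = (α⁻¹ * β) ^ b.val * (α⁻¹ * β) ^ v := by
      intro b; rw [aux_pow_val_add hγm, hγv]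
    have hg11 : ∀ w, f (ρμ (op (X11 α β)) w) = ρν (op (X11 α β)) (f w) := by
      intro w
      refine aux_intertwine f _ _ ?_ w
      rintro ⟨a, b⟩
      show f (ρμ (op (X11 α β)) (e3 α β a b)) = ρν (op (X11 α β)) (f (e3 α β a b))
      rw [h11μ a b, map_smul, hfb, hfb, map_smul, h11ν a (b + v'), smul_smul, smul_smul]
      congr 1
      by_cases ha : a = 0
      · rw [if_pos ha, if_pos ha]; ring
      · rw [if_neg ha, if_neg ha, htv b, h2]; ring
    have hg12 : ∀ w, f (ρμ (op (X12 α β)) w) = ρν (op (X12 α β)) (f w) := by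
      intro w
      refine aux_intertwine f _ _ ?_ w
      rintro ⟨a, b⟩
      show f (ρμ (op (X12 α β)) (e3 α β a b)) = ρν (op (X12 α β)) (f (e3 α β a b))
      rw [h12μ a b, map_smul, hfb, hfb, map_smul, h12ν a (b + v'), smul_smul, smul_smul]
      have hidx : b - 1 + v' = b + v' - 1 := by ring
      rw [hidx]
      congr 1
      rw [htv b, h2]
      have hts := aux_pow_val_sub_one htm b
      rw [← hts]
      linear_combination (-((ν₁ * μ₁⁻¹) ^ (b - 1).val * μ₁⁻¹ * ν₂ * β ^ a.val *
        (α⁻¹ * β) ^ b.val * (α⁻¹ * β) ^ v)) * mul_inv_cancel₀ hν₁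
    have hg21 : ∀ w, f (ρμ (op (X21 α β)) w) = ρν (op (X21 α β)) (f w) := by
      intro w
      refine aux_intertwine f _ _ ?_ w
      rintro ⟨a, b⟩
      show f (ρμ (op (X21 α β)) (e3 α β a b)) = ρν (op (X21 α β)) (f (e3 α β a b))
      rw [h21μ a b, map_smul, hfb, hfb, map_smul, h21ν a (b + v'), smul_smul, smul_smul]
      have hidx : b + 1 + v' = b + v' + 1 := by ring
      rw [hidx]
      congr 1
      rw [aux_pow_val_add_one htm b]
      field_simp
    have hg22 : ∀ w, f (ρμ (op (X22 α β)) w) = ρν (op (X22 α β)) (f w) := by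
      intro w
      refine aux_intertwine f _ _ ?_ w
      rintro ⟨a, b⟩
      show f (ρμ (op (X22 α β)) (e3 α β a b)) = ρν (op (X22 α β)) (f (e3 α β a b))
      rw [h22μ a b, hfb, map_smul, h22ν a (b + v')]
      by_cases htop : a.val = orderOf (α * β) - 1
      · rw [if_pos htop, if_pos htop, map_zero, smul_zero]
      · rw [if_neg htop, if_neg htop, hfb]
    refine ⟨f, ?_⟩
    intro x
    obtain ⟨y, rfl⟩ := RingQuot.mkAlgHom_surjective K (QMRel α β) x
    refine FreeAlgebra.induction K (Fin 4)
      (motive := fun y => ∀ w, f (ρμ (op (RingQuot.mkAlgHom K (QMRel α β) y)) w) =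
        ρν (op (RingQuot.mkAlgHom K (QMRel α β) y)) (f w)) ?_ ?_ ?_ ?_ y
    · intro r w
      rw [AlgHom.commutes]
      have hop : op ((algebraMap K (QM α β)) r) = algebraMap K ((QM α β)ᵐᵒᵖ) r := rfl
      rw [hop, AlgHom.commutes, AlgHom.commutes]
      rw [Module.algebraMap_end_apply, Module.algebraMap_end_apply, map_smul]
    · intro i w
      fin_cases i
      · exact hg11 w
      · exact hg12 w
      · exact hg21 w
      · exact hg22 w
    · intro x y hx hy w
      rw [map_mul, op_mul, map_mul, map_mul]
      rw [Module.End.mul_apply, Module.End.mul_apply, hy, hx]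
    · intro x y hx hy w
      rw [map_add, op_add, map_add, map_add]
      rw [LinearMap.add_apply, LinearMap.add_apply, map_add, hx, hy]
end
end
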